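/- arXiv:1706.05755 — 8 statements merged into one kernel-verified Lean document; each statement's English description precedes it below -/
import Mathlib

section
/- Let (X, M) be a multi-normed vector lattice and e ∈ X₊ a nonzero element. Then e is a quasi-interior point (i.e., the principal ideal I_e is m-dense in X) if and only if for every x ∈ X₊ the sequence x ∧ ne m-converges to x as n → ∞. -/
open Filter Topology

/-- The (locally convex-solid) topology on `X` generated by a family of lattice seminorms:
subbasic open sets are the seminorm balls. -/
def mTop {X : Type*} [AddCommGroup X] [Lattice X] {Λ : Type*} (m : Λ → X → ℝ) :
    TopologicalSpace X :=
  TopologicalSpace.generateFrom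
    {s | ∃ (z : X) (ε : ℝ) (l : Λ), 0 < ε ∧ s = {y : X | m l (y - z) < ε}}

/-- In an MNVL `(X, M)`, a nonzero `e ∈ X₊` is a quasi-interior point (the
principal ideal `I_e` is m-dense in `X`) iff for every `x ∈ X₊` the sequence `x ⊓ n e`
m-converges to `x`. -/
theorem stmt3 {X : Type*} [AddCommGroup X] [Lattice X]
    [CovariantClass X X (· + ·) (· ≤ ·)] [Module ℝ X]
    {Λ : Type*} (m : Λ → X → ℝ)
    (hadd : ∀ l (x y : X), m l (x + y) ≤ m l x + m l y)
    (hsmul : ∀ l (c : ℝ) (x : X), m l (c • x) = |c| * m l x)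
    (hmono : ∀ l (x y : X), |x| ≤ |y| → m l x ≤ m l y)
    (hsep : ∀ x : X, (∀ l, m l x = 0) → x = 0)
    (hdir : ∀ l₁ l₂, ∃ l₃, ∀ x : X, m l₁ x ≤ m l₃ x ∧ m l₂ x ≤ m l₃ x)
    (e : X) (he : 0 ≤ e) (hne : e ≠ 0) :
    @Dense X (mTop m) {x : X | ∃ c : ℝ, 0 < c ∧ |x| ≤ c • e} ↔
      ∀ x : X, 0 ≤ x → ∀ l, Tendsto (fun n : ℕ => m l (x - x ⊓ (n • e))) atTop (𝓝 0) := by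
  have hzero : ∀ l, m l (0 : X) = 0 := by
    intro l; have h := hsmul l 0 (0 : X); simpa using h
  have hneg : ∀ l (x : X), m l (-x) = m l x := by
    intro l x; have h := hsmul l (-1) x; simpa using h
  have hnonneg : ∀ l (x : X), 0 ≤ m l x := by
    intro l x
    have h1 := hadd l x (-x)
    rw [hneg l x] at h1
    simp only [add_neg_cancel, hzero l] at h1
    linarith
  -- powers of two are "semiclosed" in any lattice-ordered group
  have hpow : ∀ (j : ℕ) (a : X), 0 ≤ (2 ^ j) • a → 0 ≤ a := by
    intro j
    induction j with
    | zero => intro a h; simpa using h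
    | succ j ih =>
      intro a h
      rw [pow_succ, mul_nsmul] at h
      exact ih _ (nsmul_two_semiclosed h)
  -- dyadic-rational multiples of positive elements are positive
  have hdyadic : ∀ (k j : ℕ) (w : X), 0 ≤ w → 0 ≤ ((k : ℝ) / 2 ^ j) • w := by
    intro k j w hw
    apply hpow j
    have hcalc : (2 ^ j) • (((k : ℝ) / 2 ^ j) • w) = k • w := by
      rw [← Nat.cast_smul_eq_nsmul ℝ (2 ^ j) _, ← Nat.cast_smul_eq_nsmul ℝ k w, smul_smul]
      congr 1
      push_cast
      field_simp
    rw [hcalc]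
    exact nsmul_nonneg hw k
  -- nonnegative real multiples of positive elements are positive
  have hsmul_nonneg : ∀ (t : ℝ), 0 ≤ t → ∀ w : X, 0 ≤ w → 0 ≤ t • w := by
    intro t ht w hw
    have key : ∀ l, m l (t • w ⊓ 0) = 0 := by
      intro l
      have hb : ∀ j : ℕ, m l (t • w ⊓ 0) ≤ (1 / 2 ^ j) * m l w := by
        intro j
        set q : ℝ := (⌈t * 2 ^ j⌉₊ : ℝ) / 2 ^ j with hqdef
        have h2j : (0:ℝ) < 2 ^ j := by positivity
        have hq0 : 0 ≤ q • w := hdyadic _ j w hw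
        have hqw : q • w ⊓ 0 = 0 := inf_eq_right.mpr hq0
        have h1 : |t • w ⊓ 0| ≤ |t • w - q • w| := by
          have h := abs_inf_sub_inf_le_abs (t • w) (q • w) 0
          rwa [hqw, sub_zero] at h
        have h2 : m l (t • w ⊓ 0) ≤ |t - q| * m l w := by
          have h := hmono l (t • w ⊓ 0) (t • w - q • w) h1
          rwa [← sub_smul, hsmul] at h
        have hqt : t ≤ q := by
          rw [hqdef, le_div_iff₀ h2j]
          exact Nat.le_ceil _
        have hq1 : q ≤ t + 1 / 2 ^ j := by
          rw [hqdef, div_le_iff₀ h2j]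
          have hceil : (⌈t * 2 ^ j⌉₊ : ℝ) < t * 2 ^ j + 1 :=
            Nat.ceil_lt_add_one (mul_nonneg ht (by positivity))
          calc (⌈t * 2 ^ j⌉₊ : ℝ) ≤ t * 2 ^ j + 1 := hceil.le
            _ = (t + 1 / 2 ^ j) * 2 ^ j := by field_simp
        have habs : |t - q| ≤ 1 / 2 ^ j := by
          rw [abs_of_nonpos (by linarith)]
          linarith
        calc m l (t • w ⊓ 0) ≤ |t - q| * m l w := h2
          _ ≤ (1 / 2 ^ j) * m l w := mul_le_mul_of_nonneg_right habs (hnonneg l w)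
      have hle : m l (t • w ⊓ 0) ≤ 0 := by
        by_contra hcon
        push_neg at hcon
        obtain ⟨j, hj⟩ := pow_unbounded_of_one_lt (m l w / m l (t • w ⊓ 0)) (one_lt_two : (1:ℝ) < 2)
        have h2j : (0:ℝ) < 2 ^ j := by positivity
        rw [div_lt_iff₀ hcon] at hj
        have hlt : (1 / 2 ^ j) * m l w < m l (t • w ⊓ 0) := by
          rw [div_mul_eq_mul_div, one_mul, div_lt_iff₀ h2j]
          linarith
        linarith [hb j]
      exact le_antisymm hle (hnonneg l _)
    exact inf_eq_right.mp (hsep _ key)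
  -- `Λ` is nonempty
  have hΛ : Nonempty Λ := by
    by_contra hcon
    rw [not_nonempty_iff] at hcon
    exact hne (hsep e (fun l => (hcon.false l).elim))
  obtain ⟨l₀⟩ := hΛ
  -- every open set contains a seminorm ball around each of its points
  have key : ∀ o : Set X,
      TopologicalSpace.GenerateOpen
        {s | ∃ (z : X) (ε : ℝ) (l : Λ), 0 < ε ∧ s = {y : X | m l (y - z) < ε}} o →
      ∀ x ∈ o, ∃ (l : Λ) (ε : ℝ), 0 < ε ∧ {y : X | m l (y - x) < ε} ⊆ o := by
    intro o ho
    induction ho with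
    | basic s hs =>
      obtain ⟨z, ε, l, hε, rfl⟩ := hs
      intro x hx
      have hx' : m l (x - z) < ε := hx
      refine ⟨l, ε - m l (x - z), by linarith, fun y hy => ?_⟩
      have hy' : m l (y - x) < ε - m l (x - z) := hy
      show m l (y - z) < ε
      have htri : m l (y - z) ≤ m l (y - x) + m l (x - z) := by
        have h := hadd l (y - x) (x - z)
        rwa [sub_add_sub_cancel] at h
      linarith
    | univ => exact fun x _ => ⟨l₀, 1, one_pos, fun y _ => trivial⟩
    | inter s t _ _ ihs iht =>
      intro x hx
      obtain ⟨l1, ε1, hε1, hb1⟩ := ihs x hx.1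
      obtain ⟨l2, ε2, hε2, hb2⟩ := iht x hx.2
      obtain ⟨l3, hl3⟩ := hdir l1 l2
      refine ⟨l3, min ε1 ε2, lt_min hε1 hε2, fun y hy => ?_⟩
      have hy' : m l3 (y - x) < min ε1 ε2 := hy
      exact ⟨hb1 (lt_of_le_of_lt (hl3 _).1 (lt_of_lt_of_le hy' (min_le_left _ _))),
             hb2 (lt_of_le_of_lt (hl3 _).2 (lt_of_lt_of_le hy' (min_le_right _ _)))⟩
    | sUnion T _ ih =>
      intro x hx
      obtain ⟨t, htT, hxt⟩ := hx
      obtain ⟨l, ε, hε, hb⟩ := ih t htT x hxt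
      exact ⟨l, ε, hε, hb.trans (Set.subset_sUnion_of_mem htT)⟩
  -- characterization of closure points in the m-topology
  have hchar : ∀ (S : Set X) (x : X), x ∈ @closure X (mTop m) S ↔
      ∀ l (ε : ℝ), 0 < ε → ∃ y ∈ S, m l (y - x) < ε := by
    intro S x
    letI : TopologicalSpace X := mTop m
    rw [mem_closure_iff]
    constructor
    · intro h l ε hε
      obtain ⟨y, hy1, hy2⟩ := h {y : X | m l (y - x) < ε}
        (TopologicalSpace.GenerateOpen.basic _ ⟨x, ε, l, hε, rfl⟩)
        (by simp only [Set.mem_setOf_eq, sub_self, hzero l]; exact hε)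
      exact ⟨y, hy2, hy1⟩
    · intro h o ho hxo
      obtain ⟨l, ε, hε, hsub⟩ := key o ho x hxo
      obtain ⟨y, hyS, hy⟩ := h l ε hε
      exact ⟨y, hsub hy, hyS⟩
  constructor
  · -- density implies convergence
    intro hd x hx l
    rw [Metric.tendsto_atTop]
    intro ε hε
    obtain ⟨y, hyS, hy⟩ := (hchar _ x).1 (hd x) l ε hε
    obtain ⟨c, hc, hyc⟩ := hyS
    refine ⟨⌈c⌉₊, fun n hn => ?_⟩
    have hcn : c ≤ (n : ℝ) := (Nat.le_ceil c).trans (Nat.cast_le.mpr hn)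
    have hyne : y ≤ n • e := by
      have h1 : c • e ≤ (n : ℝ) • e := by
        have h := hsmul_nonneg ((n : ℝ) - c) (by linarith) e he
        rw [sub_smul] at h
        exact sub_nonneg.mp h
      calc y ≤ |y| := le_abs_self y
        _ ≤ c • e := hyc
        _ ≤ (n : ℝ) • e := h1
        _ = n • e := Nat.cast_smul_eq_nsmul ℝ n e
    have h2 : (0:X) ≤ x - x ⊓ n • e := sub_nonneg.mpr inf_le_left
    have h3 : x - x ⊓ n • e ≤ |x - y| := by
      have hxy : x - x ⊓ y ≤ |x - y| := by
        rw [sub_inf]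
        exact sup_le (by rw [sub_self]; exact abs_nonneg _) (le_abs_self _)
      calc x - x ⊓ n • e ≤ x - x ⊓ y := sub_le_sub_left (inf_le_inf_left x hyne) x
        _ ≤ |x - y| := hxy
    have h4 : m l (x - x ⊓ n • e) ≤ m l (x - y) :=
      hmono l _ _ (by rw [abs_of_nonneg h2]; exact h3)
    have h5 : m l (x - y) < ε := by
      have heq : m l (x - y) = m l (y - x) := by
        rw [← neg_sub y x, hneg]
      linarith
    rw [Real.dist_eq, sub_zero, abs_of_nonneg (hnonneg l _)]
    exact lt_of_le_of_lt h4 h5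
  · -- convergence implies density
    intro h
    intro x
    rw [hchar]
    intro l ε hε
    have hp := h (x⁺) (posPart_nonneg x) l
    have hq := h (x⁻) (negPart_nonneg x) l
    rw [Metric.tendsto_atTop] at hp hq
    obtain ⟨N₁, hN₁⟩ := hp (ε/2) (by linarith)
    obtain ⟨N₂, hN₂⟩ := hq (ε/2) (by linarith)
    set n : ℕ := max (max N₁ N₂) 1 with hndef
    have hn1 : 1 ≤ n := le_max_right _ _
    have hne0 : (0:X) ≤ n • e := nsmul_nonneg he n
    have hnn1 : (1:ℝ) ≤ (n:ℝ) := by exact_mod_cast hn1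
    refine ⟨x⁺ ⊓ n • e - x⁻ ⊓ n • e, ⟨2 * (n:ℝ), by linarith, ?_⟩, ?_⟩
    · have hple : x⁺ ⊓ n • e ≤ n • e := inf_le_right
      have hpn : (0:X) ≤ x⁺ ⊓ n • e := le_inf (posPart_nonneg x) hne0
      have hqle : x⁻ ⊓ n • e ≤ n • e := inf_le_right
      have hqn : (0:X) ≤ x⁻ ⊓ n • e := le_inf (negPart_nonneg x) hne0
      calc |x⁺ ⊓ n • e - x⁻ ⊓ n • e|
          = |x⁺ ⊓ n • e + -(x⁻ ⊓ n • e)| := by rw [sub_eq_add_neg]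
        _ ≤ |x⁺ ⊓ n • e| + |(-(x⁻ ⊓ n • e))| := abs_add_le _ _
        _ = (x⁺ ⊓ n • e) + (x⁻ ⊓ n • e) := by
            rw [abs_neg, abs_of_nonneg hpn, abs_of_nonneg hqn]
        _ ≤ n • e + n • e := add_le_add hple hqle
        _ = (2 * (n:ℝ)) • e := by
            rw [← Nat.cast_smul_eq_nsmul ℝ n e, ← add_smul, two_mul]
    · have hx1 : m l (x⁺ - x⁺ ⊓ n • e) < ε/2 := by
        have h1 := hN₁ n (le_trans (le_max_left _ _) (le_max_left _ _))
        rwa [Real.dist_eq, sub_zero, abs_of_nonneg (hnonneg l _)] at h1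
      have hx2 : m l (x⁻ - x⁻ ⊓ n • e) < ε/2 := by
        have h2 := hN₂ n (le_trans (le_max_right _ _) (le_max_left _ _))
        rwa [Real.dist_eq, sub_zero, abs_of_nonneg (hnonneg l _)] at h2
      have habel : ∀ p q p' q' : X, (p' - q') - (p - q) = -(p - p') + (q - q') := by
        intro p q p' q'; abel
      have hyx := habel (x⁺) (x⁻) (x⁺ ⊓ n • e) (x⁻ ⊓ n • e)
      rw [posPart_sub_negPart x] at hyx
      calc m l ((x⁺ ⊓ n • e - x⁻ ⊓ n • e) - x)
          ≤ m l (-(x⁺ - x⁺ ⊓ n • e)) + m l (x⁻ - x⁻ ⊓ n • e) := by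
            rw [hyx]; exact hadd l _ _
        _ = m l (x⁺ - x⁺ ⊓ n • e) + m l (x⁻ - x⁻ ⊓ n • e) := by rw [hneg]
        _ < ε := by linarith
end

section
/- Let (X, M) be a multi-normed vector lattice and e ∈ X₊ nonzero. If for every x ∈ X₊ one has x ∧ ne m-converges to x as n → ∞, then e is strictly positive on the topological dual, i.e., every positive nonzero continuous linear functional f on X satisfies f(e) > 0. -/
open Filter Topology

/-- In an MNVL, if `x ⊓ n e` m-converges to `x` for every `x ∈ X₊`, then `e`
is strictly positive on the topological dual: every positive nonzero m-continuous linear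
functional `f` satisfies `f e > 0`. -/
theorem stmt4 {X : Type*} [AddCommGroup X] [Lattice X]
    [CovariantClass X X (· + ·) (· ≤ ·)] [Module ℝ X]
    {Λ : Type*} (m : Λ → X → ℝ)
    (hadd : ∀ l (x y : X), m l (x + y) ≤ m l x + m l y)
    (hsmul : ∀ l (c : ℝ) (x : X), m l (c • x) = |c| * m l x)
    (hmono : ∀ l (x y : X), |x| ≤ |y| → m l x ≤ m l y)
    (hsep : ∀ x : X, (∀ l, m l x = 0) → x = 0)
    (hdir : ∀ l₁ l₂, ∃ l₃, ∀ x : X, m l₁ x ≤ m l₃ x ∧ m l₂ x ≤ m l₃ x)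
    (e : X) (he : 0 ≤ e) (hne : e ≠ 0)
    (hq : ∀ x : X, 0 ≤ x → ∀ l, Tendsto (fun n : ℕ => m l (x - x ⊓ (n • e))) atTop (𝓝 0))
    (f : X →ₗ[ℝ] ℝ) (hfc : @Continuous X ℝ (mTop m) _ f)
    (hfpos : ∀ x : X, 0 ≤ x → 0 ≤ f x) (hfne : f ≠ 0) :
    0 < f e := by
  letI : TopologicalSpace X := mTop m
  -- Λ is "inhabited" via e ≠ 0
  obtain ⟨l₀, -⟩ : ∃ l, m l e ≠ 0 := by
    by_contra h
    push_neg at h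
    exact hne (hsep e h)
  -- key: every m-open set containing 0 contains a seminorm ball
  have key : ∀ U : Set X, IsOpen U → (0 : X) ∈ U →
      ∃ l δ, 0 < δ ∧ ∀ y : X, m l y < δ → y ∈ U := by
    intro U hU
    induction hU with
    | basic s hs =>
      intro h0
      obtain ⟨z, ε, l, hε, rfl⟩ := hs
      refine ⟨l, ε - m l (0 - z), by simpa using h0, fun y hy => ?_⟩
      have : m l (y - z) ≤ m l y + m l (0 - z) := by
        have := hadd l y (0 - z)
        simpa [sub_eq_add_neg] using this
      simp only [Set.mem_setOf_eq]
      linarith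
    | univ => exact fun _ => ⟨l₀, 1, one_pos, fun _ _ => trivial⟩
    | inter s t _ _ ihs iht =>
      intro h0
      obtain ⟨l₁, δ₁, hδ₁, h₁⟩ := ihs h0.1
      obtain ⟨l₂, δ₂, hδ₂, h₂⟩ := iht h0.2
      obtain ⟨l₃, hl₃⟩ := hdir l₁ l₂
      exact ⟨l₃, min δ₁ δ₂, lt_min hδ₁ hδ₂, fun y hy =>
        ⟨h₁ y (lt_of_le_of_lt (hl₃ y).1 (lt_of_lt_of_le hy (min_le_left _ _))),
         h₂ y (lt_of_le_of_lt (hl₃ y).2 (lt_of_lt_of_le hy (min_le_right _ _)))⟩⟩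
    | sUnion S _ ih =>
      intro h0
      obtain ⟨s, hs, h0s⟩ := h0
      obtain ⟨l, δ, hδ, h⟩ := ih s hs h0s
      exact ⟨l, δ, hδ, fun y hy => ⟨s, hs, h y hy⟩⟩
  -- convergence transfer: f(y n) → 0 when all seminorms of y n → 0
  have trans : ∀ (y : ℕ → X), (∀ l, Tendsto (fun n => m l (y n)) atTop (𝓝 0)) →
      Tendsto (fun n => f (y n)) atTop (𝓝 0) := by
    intro y hy
    rw [Metric.tendsto_atTop]
    intro ε hε
    have hopen : IsOpen (f ⁻¹' Set.Ioo (-ε) ε) := hfc.isOpen_preimage _ isOpen_Ioo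
    have h0 : (0 : X) ∈ f ⁻¹' Set.Ioo (-ε) ε := by
      simp only [Set.mem_preimage, map_zero, Set.mem_Ioo]
      constructor <;> linarith
    obtain ⟨l, δ, hδ, hball⟩ := key _ hopen h0
    obtain ⟨N, hN⟩ := (Metric.tendsto_atTop.mp (hy l)) δ hδ
    refine ⟨N, fun n hn => ?_⟩
    have hm : m l (y n) < δ := by
      have := hN n hn
      rw [Real.dist_eq, sub_zero] at this
      exact lt_of_abs_lt this
    have := hball (y n) hm
    simp only [Set.mem_preimage, Set.mem_Ioo] at this
    rw [Real.dist_eq, sub_zero]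
    exact abs_lt.mpr this
  -- monotonicity of f
  have fmono : ∀ a b : X, a ≤ b → f a ≤ f b := by
    intro a b hab
    have := hfpos (b - a) (by simpa using hab)
    simp only [map_sub] at this
    linarith
  have hfe : 0 ≤ f e := hfpos e he
  rcases hfe.lt_or_eq with h | h
  · exact h
  -- suppose f e = 0; then f = 0, contradiction
  exfalso
  have hfe0 : f e = 0 := h.symm
  have hzero : ∀ x : X, 0 ≤ x → f x = 0 := by
    intro x hx
    have hnse : ∀ n : ℕ, (0 : X) ≤ n • e := fun n => nsmul_nonneg he n
    have hfin : ∀ n : ℕ, f (x ⊓ (n • e)) = 0 := by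
      intro n
      have h1 : 0 ≤ f (x ⊓ (n • e)) := hfpos _ (le_inf hx (hnse n))
      have h2 : f (x ⊓ (n • e)) ≤ f (n • e) := fmono _ _ inf_le_right
      have h3 : f (n • e) = 0 := by rw [map_nsmul, hfe0, smul_zero]
      linarith
    have hconst : ∀ n : ℕ, f (x - x ⊓ (n • e)) = f x := by
      intro n
      rw [map_sub, hfin n, sub_zero]
    have := trans (fun n => x - x ⊓ (n • e)) (hq x hx)
    simp only [hconst] at this
    exact tendsto_nhds_unique tendsto_const_nhds this
  -- now f = 0 everywhere
  apply hfne
  ext x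
  have h1 : f (x ⊔ 0) = 0 := hzero _ le_sup_right
  have h2 : f (x ⊓ 0) = 0 := by
    have : f (-(x ⊓ 0)) = 0 := by
      apply hzero
      rw [neg_inf, neg_zero]
      exact le_sup_right
    simp only [map_neg] at this
    linarith
  have hx : x = (x ⊔ 0) + (x ⊓ 0) := by
    rw [add_comm, inf_add_sup, add_zero]
  rw [LinearMap.zero_apply]
  calc f x = f ((x ⊔ 0) + (x ⊓ 0)) := by rw [← hx]
    _ = 0 := by rw [map_add, h1, h2, add_zero]
end

section
/- Let (X, M) be a multi-normed vector lattice. The collection of sets V_{ε,u,λ} = {x ∈ X : m_λ(|x| ∧ u) < ε}, for ε > 0, 0 ≠ u ∈ X₊, λ ∈ Λ, forms a neighborhood base at zero for a Hausdorff locally solid linear topology on X, and a net x_α converges to 0 in this topology if and only if m_λ(|x_α| ∧ u) → 0 for all u ∈ X₊ and all λ ∈ Λ. -/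
open Filter Topology

section umAux

variable {X : Type*} [AddCommGroup X] [Lattice X]
  [CovariantClass X X (· + ·) (· ≤ ·)] [Module ℝ X] {Λ : Type*}

private lemma um_inf_add {a b u : X} (ha : 0 ≤ a) (hb : 0 ≤ b) (hu : 0 ≤ u) :
    (a + b) ⊓ u ≤ a ⊓ u + b ⊓ u := by
  have h : a ⊓ u + b ⊓ u = ((a + b) ⊓ (a + u)) ⊓ ((u + b) ⊓ (u + u)) := by
    rw [inf_add, add_inf, add_inf]
  rw [h]
  refine le_inf (le_inf inf_le_left ?_) (le_inf ?_ ?_)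
  · exact inf_le_right.trans (le_add_of_nonneg_left ha)
  · exact inf_le_right.trans (le_add_of_nonneg_right hb)
  · exact inf_le_right.trans (le_add_of_nonneg_left hu)

private lemma um_nsmul_inf {a u : X} (ha : 0 ≤ a) (hu : 0 ≤ u) :
    ∀ n : ℕ, (n • a) ⊓ u ≤ n • (a ⊓ u)
  | 0 => by simp [inf_eq_left.mpr hu]
  | n + 1 => by
    rw [succ_nsmul, succ_nsmul]
    calc (n • a + a) ⊓ u ≤ (n • a) ⊓ u + a ⊓ u :=
          um_inf_add (nsmul_nonneg ha n) ha hu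
      _ ≤ n • (a ⊓ u) + a ⊓ u := add_le_add (um_nsmul_inf ha hu n) le_rfl

variable {m : Λ → X → ℝ}

private lemma um_m_zero (hsmul : ∀ l (c : ℝ) (x : X), m l (c • x) = |c| * m l x) (l : Λ) :
    m l 0 = 0 := by
  have := hsmul l 0 0
  simpa using this

private lemma um_m_neg (hsmul : ∀ l (c : ℝ) (x : X), m l (c • x) = |c| * m l x) (l : Λ) (x : X) :
    m l (-x) = m l x := by
  have := hsmul l (-1) x
  simpa using this

private lemma um_m_nonneg (hadd : ∀ l (x y : X), m l (x + y) ≤ m l x + m l y)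
    (hsmul : ∀ l (c : ℝ) (x : X), m l (c • x) = |c| * m l x) (l : Λ) (x : X) :
    0 ≤ m l x := by
  have h0 : m l 0 = 0 := um_m_zero hsmul l
  have h1 := hadd l x (-x)
  rw [add_neg_cancel, h0, um_m_neg hsmul] at h1
  linarith

private lemma um_m_abs (hmono : ∀ l (x y : X), |x| ≤ |y| → m l x ≤ m l y) (l : Λ) (x : X) :
    m l |x| = m l x :=
  le_antisymm (hmono l _ _ (by rw [abs_abs])) (hmono l _ _ (by rw [abs_abs]))

private lemma um_m_nsmul (hadd : ∀ l (x y : X), m l (x + y) ≤ m l x + m l y)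
    (hsmul : ∀ l (c : ℝ) (x : X), m l (c • x) = |c| * m l x) (l : Λ) (x : X) :
    ∀ n : ℕ, m l (n • x) ≤ n * m l x
  | 0 => by simp [um_m_zero hsmul l]
  | n + 1 => by
    rw [succ_nsmul]
    calc m l (n • x + x) ≤ m l (n • x) + m l x := hadd l _ _
      _ ≤ n * m l x + m l x := add_le_add (um_m_nsmul hadd hsmul l x n) le_rfl
      _ = (n + 1 : ℕ) * m l x := by push_cast; ring

private lemma um_pow2 : ∀ (j : ℕ) (y : X), 0 ≤ (2 : ℝ) ^ j • y → 0 ≤ y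
  | 0, y, h => by simpa using h
  | j + 1, y, h => by
    have h2 : 0 ≤ (2 : ℝ) ^ j • ((2 : ℝ) • y) := by
      rwa [smul_smul, ← pow_succ]
    have h3 : 0 ≤ (2 : ℝ) • y := um_pow2 j _ h2
    have h4 : ((2 : ℕ) : ℝ) • y = (2 : ℕ) • y := Nat.cast_smul_eq_nsmul ℝ 2 y
    have h5 : 0 ≤ (2 : ℕ) • y := by
      rw [← h4]; push_cast; exact h3
    exact nsmul_two_semiclosed h5

private lemma um_dyadic (c : ℝ) (hc : 0 ≤ c) {δ : ℝ} (hδ : 0 < δ) :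
    ∃ q : ℝ, (∃ k j : ℕ, q = (k : ℝ) / 2 ^ j) ∧ |q - c| < δ := by
  obtain ⟨j, hj⟩ := pow_unbounded_of_one_lt (1 / δ) (one_lt_two (α := ℝ))
  have h2 : (0 : ℝ) < 2 ^ j := by positivity
  set k := ⌊c * 2 ^ j⌋₊ with hk
  refine ⟨(k : ℝ) / 2 ^ j, ⟨k, j, rfl⟩, ?_⟩
  have hle : (k : ℝ) ≤ c * 2 ^ j := Nat.floor_le (by positivity)
  have hlt : c * 2 ^ j < (k : ℝ) + 1 := Nat.lt_floor_add_one _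
  have h1δ : 1 / 2 ^ j < δ := by
    rw [div_lt_iff₀ h2]
    rw [div_lt_iff₀ hδ] at hj
    nlinarith
  rw [abs_sub_lt_iff]
  constructor
  · have : (k : ℝ) / 2 ^ j ≤ c := by rw [div_le_iff₀ h2]; linarith
    linarith
  · have : c - (k : ℝ) / 2 ^ j < 1 / 2 ^ j := by
      rw [sub_lt_iff_lt_add, ← add_div, lt_div_iff₀ h2]
      linarith
    linarith

private lemma um_smul_nonneg (hadd : ∀ l (x y : X), m l (x + y) ≤ m l x + m l y)
    (hsmul : ∀ l (c : ℝ) (x : X), m l (c • x) = |c| * m l x)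
    (hmono : ∀ l (x y : X), |x| ≤ |y| → m l x ≤ m l y)
    (hsep : ∀ x : X, (∀ l, m l x = 0) → x = 0)
    {c : ℝ} (hc : 0 ≤ c) {x : X} (hx : 0 ≤ x) : 0 ≤ c • x := by
  have hdy : ∀ q : ℝ, (∃ k j : ℕ, q = (k : ℝ) / 2 ^ j) → 0 ≤ q • x := by
    rintro q ⟨k, j, rfl⟩
    apply um_pow2 j
    have h2 : ((2 : ℝ) ^ j) ≠ 0 := by positivity
    rw [smul_smul, mul_div_cancel₀ _ h2, Nat.cast_smul_eq_nsmul]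
    exact nsmul_nonneg hx k
  rw [← negPart_eq_zero]
  apply hsep
  intro l
  have hbound : ∀ q : ℝ, 0 ≤ q • x → m l ((c • x)⁻) ≤ |q - c| * m l x := by
    intro q hq
    have h1 : (q • x)⁻ = 0 := negPart_eq_zero.2 hq
    have h2 : |(c • x)⁻ - (q • x)⁻| ≤ |(c • x) - (q • x)| := by
      have h := abs_sup_sub_sup_le_abs (-(c • x)) (-(q • x)) 0
      rw [neg_sub_neg] at h
      rw [negPart_def, negPart_def, abs_sub_comm (c • x) (q • x)]
      exact h
    have h3 : m l ((c • x)⁻) ≤ m l ((c - q) • x) := by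
      apply hmono
      rw [h1, sub_zero] at h2
      calc |((c • x)⁻)| = (c • x)⁻ := abs_of_nonneg (negPart_nonneg _)
        _ = |(c • x)⁻ - (q • x)⁻| := by rw [h1, sub_zero, abs_of_nonneg (negPart_nonneg _)]
        _ ≤ |(c • x) - (q • x)| := by rw [h1, sub_zero]; exact h2
        _ = |(c - q) • x| := by rw [sub_smul]
    rw [hsmul, abs_sub_comm] at h3
    exact h3
  by_contra hne
  have hpos : 0 < m l ((c • x)⁻) :=
    lt_of_le_of_ne (um_m_nonneg hadd hsmul l _) (Ne.symm hne)
  set v := m l ((c • x)⁻) with hv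
  have hmx : 0 ≤ m l x := um_m_nonneg hadd hsmul l x
  have hδ : 0 < v / (m l x + 1) := by positivity
  obtain ⟨q, hqd, hqc⟩ := um_dyadic c hc hδ
  have hb := hbound q (hdy q hqd)
  have : v ≤ |q - c| * m l x := hb
  have h4 : |q - c| * m l x < v / (m l x + 1) * (m l x + 1) := by
    apply lt_of_le_of_lt (b := |q - c| * (m l x + 1))
    · have := abs_nonneg (q - c); nlinarith
    · apply mul_lt_mul_of_pos_right hqc; positivity
  rw [div_mul_cancel₀] at h4
  · linarith
  · positivity

private lemma um_smul_mono (hadd : ∀ l (x y : X), m l (x + y) ≤ m l x + m l y)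
    (hsmul : ∀ l (c : ℝ) (x : X), m l (c • x) = |c| * m l x)
    (hmono : ∀ l (x y : X), |x| ≤ |y| → m l x ≤ m l y)
    (hsep : ∀ x : X, (∀ l, m l x = 0) → x = 0)
    {c : ℝ} (hc : 0 ≤ c) {a b : X} (hab : a ≤ b) : c • a ≤ c • b := by
  have h := um_smul_nonneg hadd hsmul hmono hsep hc (sub_nonneg.2 hab)
  rw [← sub_nonneg, ← smul_sub]
  exact h

private lemma um_abs_smul (hadd : ∀ l (x y : X), m l (x + y) ≤ m l x + m l y)
    (hsmul : ∀ l (c : ℝ) (x : X), m l (c • x) = |c| * m l x)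
    (hmono : ∀ l (x y : X), |x| ≤ |y| → m l x ≤ m l y)
    (hsep : ∀ x : X, (∀ l, m l x = 0) → x = 0)
    (c : ℝ) (x : X) : |c • x| = |c| • |x| := by
  have key : ∀ d : ℝ, 0 < d → ∀ y : X, |d • y| = d • |y| := by
    intro d hd y
    let e : X ≃o X :=
      { toFun := fun z => d • z
        invFun := fun z => d⁻¹ • z
        left_inv := fun z => inv_smul_smul₀ hd.ne' z
        right_inv := fun z => smul_inv_smul₀ hd.ne' z
        map_rel_iff' := by
          intro p q
          constructor
          · intro h
            have := um_smul_mono hadd hsmul hmono hsep (inv_nonneg.2 hd.le) h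
            simpa [inv_smul_smul₀ hd.ne'] using this
          · exact fun h => um_smul_mono hadd hsmul hmono hsep hd.le h }
    have hsup : d • (y ⊔ -y) = d • y ⊔ d • (-y) := e.map_sup y (-y)
    show (d • y) ⊔ -(d • y) = d • (y ⊔ -y)
    rw [hsup, smul_neg]
  rcases le_or_gt 0 c with hc | hc
  · rcases eq_or_lt_of_le hc with hc' | hc'
    · rw [← hc']; simp
    · rw [abs_of_pos hc']
      exact key c hc' x
  · rw [abs_of_neg hc, ← abs_neg (c • x), ← neg_smul]
    exact key (-c) (neg_pos.2 hc) x

private lemma um_key (hadd : ∀ l (x y : X), m l (x + y) ≤ m l x + m l y)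
    (hsmul : ∀ l (c : ℝ) (x : X), m l (c • x) = |c| * m l x)
    (hmono : ∀ l (x y : X), |x| ≤ |y| → m l x ≤ m l y)
    (hsep : ∀ x : X, (∀ l, m l x = 0) → x = 0)
    (l : Λ) (c : ℝ) (x u : X) (hu : 0 ≤ u) (n : ℕ) (hc : |c| ≤ (n : ℝ)) :
    m l (|c • x| ⊓ u) ≤ n * m l (|x| ⊓ u) := by
  have h1 : |c • x| ≤ n • |x| := by
    rw [um_abs_smul hadd hsmul hmono hsep]
    have h := um_smul_nonneg hadd hsmul hmono hsep (sub_nonneg.2 hc) (abs_nonneg x)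
    rw [sub_smul, sub_nonneg] at h
    calc |c| • |x| ≤ (n : ℝ) • |x| := h
      _ = n • |x| := Nat.cast_smul_eq_nsmul ℝ n |x|
  have h2 : |c • x| ⊓ u ≤ n • (|x| ⊓ u) :=
    (inf_le_inf_right u h1).trans (um_nsmul_inf (abs_nonneg x) hu n)
  have hL : (0 : X) ≤ |c • x| ⊓ u := le_inf (abs_nonneg _) hu
  have hR : (0 : X) ≤ n • (|x| ⊓ u) := nsmul_nonneg (le_inf (abs_nonneg _) hu) n
  have h3 : m l (|c • x| ⊓ u) ≤ m l (n • (|x| ⊓ u)) := by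
    apply hmono
    rw [abs_of_nonneg hL, abs_of_nonneg hR]
    exact h2
  exact h3.trans (um_m_nsmul hadd hsmul l _ n)

private lemma um_abs_eq_zero {x : X} (h : |x| = 0) : x = 0 :=
  le_antisymm ((le_abs_self x).trans h.le) (neg_nonpos.1 ((neg_le_abs x).trans h.le))

private lemma um_solid {v w u : X} (hv : 0 ≤ v) (hvw : v ≤ w) : |v ⊓ u| ≤ |w ⊓ u| := by
  refine abs_le'.2 ⟨(inf_le_inf_right u hvw).trans (le_abs_self _), ?_⟩
  rw [neg_le]
  refine le_inf ?_ ?_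
  · exact le_trans (neg_nonpos.2 (abs_nonneg _)) hv
  · exact (neg_le.2 (neg_le_abs (w ⊓ u))).trans inf_le_right

private lemma um_p_add (hadd : ∀ l (x y : X), m l (x + y) ≤ m l x + m l y)
    (hmono : ∀ l (x y : X), |x| ≤ |y| → m l x ≤ m l y)
    (l : Λ) (x y u : X) (hu : 0 ≤ u) :
    m l (|x + y| ⊓ u) ≤ m l (|x| ⊓ u) + m l (|y| ⊓ u) := by
  have h1 : |x + y| ⊓ u ≤ |x| ⊓ u + |y| ⊓ u :=
    (inf_le_inf_right u (abs_add_le x y)).trans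
      (um_inf_add (abs_nonneg x) (abs_nonneg y) hu)
  have h2 : m l (|x + y| ⊓ u) ≤ m l (|x| ⊓ u + |y| ⊓ u) := by
    apply hmono
    rw [abs_of_nonneg (le_inf (abs_nonneg _) hu),
      abs_of_nonneg (add_nonneg (le_inf (abs_nonneg _) hu) (le_inf (abs_nonneg _) hu))]
    exact h1
  exact h2.trans (hadd l _ _)

end umAux

/-- In an MNVL `(X, M)`, the sets `V_{ε,u,l} = {x : m l (|x| ⊓ u) < ε}`
(`ε > 0`, `0 ≠ u ∈ X₊`, `l ∈ Λ`) form a neighborhood base at zero of a Hausdorff locally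
solid linear topology (the um-topology), and convergence to `0` in it is exactly
um-convergence: `m l (|x_α| ⊓ u) → 0` for all `u ∈ X₊` and all `l`. -/
theorem stmt5 {X : Type*} [AddCommGroup X] [Lattice X]
    [CovariantClass X X (· + ·) (· ≤ ·)] [Module ℝ X]
    {Λ : Type*} [Nonempty Λ] [Nontrivial X] (m : Λ → X → ℝ)
    (hadd : ∀ l (x y : X), m l (x + y) ≤ m l x + m l y)
    (hsmul : ∀ l (c : ℝ) (x : X), m l (c • x) = |c| * m l x)
    (hmono : ∀ l (x y : X), |x| ≤ |y| → m l x ≤ m l y)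
    (hsep : ∀ x : X, (∀ l, m l x = 0) → x = 0)
    (hdir : ∀ l₁ l₂, ∃ l₃, ∀ x : X, m l₁ x ≤ m l₃ x ∧ m l₂ x ≤ m l₃ x) :
    ∃ τ : TopologicalSpace X,
      @T2Space X τ ∧
      @IsTopologicalAddGroup X τ _ ∧
      @ContinuousSMul ℝ X _ _ τ ∧
      -- the sets V_{ε,u,l} form a neighborhood base at zero
      (@nhds X τ 0).HasBasis
        (fun p : ℝ × X × Λ => 0 < p.1 ∧ 0 ≤ p.2.1 ∧ p.2.1 ≠ 0)
        (fun p => {x : X | m p.2.2 (|x| ⊓ p.2.1) < p.1}) ∧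
      -- each basic neighborhood of zero is solid
      (∀ (ε : ℝ) (u : X) (l : Λ) (y z : X),
          |y| ≤ |z| → m l (|z| ⊓ u) < ε → m l (|y| ⊓ u) < ε) ∧
      -- convergence to 0 in τ is exactly um-convergence
      (∀ {α : Type*} (F : Filter α) (x : α → X),
          Tendsto x F (@nhds X τ 0) ↔
            ∀ u : X, 0 ≤ u → ∀ l, Tendsto (fun a => m l (|x a| ⊓ u)) F (𝓝 0)) := by
  classical
  -- the index predicate and sets
  set good : ℝ × X × Λ → Prop := fun p => 0 < p.1 ∧ 0 ≤ p.2.1 ∧ p.2.1 ≠ 0 with hgood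
  set V : ℝ × X × Λ → Set X := fun p => {x : X | m p.2.2 (|x| ⊓ p.2.1) < p.1} with hV
  have hmem0 : ∀ p, good p → (0 : X) ∈ V p := by
    rintro ⟨ε, u, l⟩ ⟨hε, hu, -⟩
    show m l (|(0 : X)| ⊓ u) < ε
    rw [abs_zero, inf_eq_left.mpr hu, um_m_zero hsmul l]
    exact hε
  -- solidity (also gives monotonicity of the gauges)
  have solid : ∀ (ε : ℝ) (u : X) (l : Λ) (y z : X),
      |y| ≤ |z| → m l (|z| ⊓ u) < ε → m l (|y| ⊓ u) < ε := by
    intro ε u l y z hyz hz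
    have h := hmono l (|y| ⊓ u) (|z| ⊓ u) (um_solid (abs_nonneg y) hyz)
    exact lt_of_le_of_lt h hz
  -- the module filter basis
  let B : ModuleFilterBasis ℝ X :=
    { sets := V '' {p | good p}
      nonempty := by
        obtain ⟨x, hx⟩ := exists_ne (0 : X)
        obtain ⟨l⟩ := ‹Nonempty Λ›
        exact ⟨V (1, |x|, l), ⟨(1, |x|, l),
          ⟨one_pos, abs_nonneg x, fun h => hx (um_abs_eq_zero h)⟩, rfl⟩⟩
      inter_sets := by
        rintro _ _ ⟨⟨ε₁, u₁, l₁⟩, ⟨hε₁, hu₁, hn₁⟩, rfl⟩ ⟨⟨ε₂, u₂, l₂⟩, ⟨hε₂, hu₂, hn₂⟩, rfl⟩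
        obtain ⟨l₃, hl₃⟩ := hdir l₁ l₂
        have hu : (0 : X) ≤ u₁ ⊔ u₂ := le_trans hu₁ le_sup_left
        have hne : u₁ ⊔ u₂ ≠ 0 := by
          intro h
          exact hn₁ (le_antisymm (h ▸ le_sup_left) hu₁)
        refine ⟨V (min ε₁ ε₂, u₁ ⊔ u₂, l₃), ⟨(min ε₁ ε₂, u₁ ⊔ u₂, l₃),
          ⟨lt_min hε₁ hε₂, hu, hne⟩, rfl⟩, ?_⟩
        intro x hx
        have hx' : m l₃ (|x| ⊓ (u₁ ⊔ u₂)) < min ε₁ ε₂ := hx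
        have key : ∀ (l : Λ) (u : X), 0 ≤ u → u ≤ u₁ ⊔ u₂ →
            (∀ y : X, m l y ≤ m l₃ y) → m l (|x| ⊓ u) < min ε₁ ε₂ := by
          intro l u hu0 hule hle
          refine lt_of_le_of_lt (le_trans (hle _) (hmono l₃ _ _ ?_)) hx'
          rw [abs_of_nonneg (le_inf (abs_nonneg _) hu0),
            abs_of_nonneg (le_inf (abs_nonneg _) hu)]
          exact inf_le_inf_left _ hule
        constructor
        · exact lt_of_lt_of_le
            (key l₁ u₁ hu₁ le_sup_left (fun y => (hl₃ y).1)) (min_le_left _ _)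
        · exact lt_of_lt_of_le
            (key l₂ u₂ hu₂ le_sup_right (fun y => (hl₃ y).2)) (min_le_right _ _)
      zero' := by
        rintro _ ⟨p, hp, rfl⟩
        exact hmem0 p hp
      add' := by
        rintro _ ⟨⟨ε, u, l⟩, ⟨hε, hu, hn⟩, rfl⟩
        refine ⟨V (ε / 2, u, l), ⟨(ε / 2, u, l), ⟨by linarith, hu, hn⟩, rfl⟩, ?_⟩
        rintro z ⟨x, hx, y, hy, rfl⟩
        have := um_p_add hadd hmono l x y u hu
        have hx' : m l (|x| ⊓ u) < ε / 2 := hx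
        have hy' : m l (|y| ⊓ u) < ε / 2 := hy
        show m l (|x + y| ⊓ u) < ε
        linarith
      neg' := by
        rintro _ ⟨⟨ε, u, l⟩, ⟨hε, hu, hn⟩, rfl⟩
        refine ⟨V (ε, u, l), ⟨(ε, u, l), ⟨hε, hu, hn⟩, rfl⟩, ?_⟩
        intro x hx
        show m l (|(-x)| ⊓ u) < ε
        rwa [abs_neg]
      conj' := by
        rintro x₀ _ ⟨⟨ε, u, l⟩, ⟨hε, hu, hn⟩, rfl⟩
        refine ⟨V (ε, u, l), ⟨(ε, u, l), ⟨hε, hu, hn⟩, rfl⟩, ?_⟩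
        intro x hx
        simpa using hx
      smul' := by
        rintro _ ⟨⟨ε, u, l⟩, ⟨hε, hu, hn⟩, rfl⟩
        refine ⟨Metric.ball (0 : ℝ) 1, Metric.ball_mem_nhds 0 one_pos,
          V (ε, u, l), ⟨(ε, u, l), ⟨hε, hu, hn⟩, rfl⟩, ?_⟩
        rintro _ ⟨c, hc, x, hx, rfl⟩
        have hc1 : |c| ≤ (1 : ℝ) := by
          rw [Metric.mem_ball, Real.dist_eq, sub_zero] at hc
          exact hc.le
        have := um_key hadd hsmul hmono hsep l c x u hu 1 (by exact_mod_cast hc1)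
        have hx' : m l (|x| ⊓ u) < ε := hx
        show m l (|c • x| ⊓ u) < ε
        push_cast at this
        linarith
      smul_left' := by
        rintro c _ ⟨⟨ε, u, l⟩, ⟨hε, hu, hn⟩, rfl⟩
        set n : ℕ := ⌈|c|⌉₊ + 1 with hnn
        have hcn : |c| ≤ (n : ℝ) := by
          push_cast
          exact le_trans (Nat.le_ceil _) (by rw [hnn]; push_cast; linarith)
        have hεn : 0 < ε / n := by positivity
        refine ⟨V (ε / n, u, l), ⟨(ε / n, u, l), ⟨hεn, hu, hn⟩, rfl⟩, ?_⟩
        intro x hx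
        have hx' : m l (|x| ⊓ u) < ε / n := hx
        have := um_key hadd hsmul hmono hsep l c x u hu n hcn
        show m l (|c • x| ⊓ u) < ε
        have hnpos : (0 : ℝ) < n := by positivity
        calc m l (|c • x| ⊓ u) ≤ n * m l (|x| ⊓ u) := this
          _ < n * (ε / n) := by
            apply mul_lt_mul_of_pos_left hx' hnpos
          _ = ε := by field_simp
      smul_right' := by
        rintro x₀ _ ⟨⟨ε, u, l⟩, ⟨hε, hu, hn⟩, rfl⟩
        have hδ : 0 < ε / (m l x₀ + 1) := by
          have := um_m_nonneg hadd hsmul l x₀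
          positivity
        have hball : Metric.ball (0 : ℝ) (ε / (m l x₀ + 1)) ∈ 𝓝 (0 : ℝ) :=
          Metric.ball_mem_nhds 0 hδ
        filter_upwards [hball] with c hc
        rw [Metric.mem_ball, Real.dist_eq, sub_zero] at hc
        show m l (|c • x₀| ⊓ u) < ε
        have hmx : 0 ≤ m l x₀ := um_m_nonneg hadd hsmul l x₀
        have h1 : m l (|c • x₀| ⊓ u) ≤ m l (c • x₀) := by
          apply hmono
          rw [abs_of_nonneg (le_inf (abs_nonneg _) hu)]
          exact inf_le_left
        rw [hsmul] at h1
        have habs : 0 ≤ |c| := abs_nonneg c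
        calc m l (|c • x₀| ⊓ u) ≤ |c| * m l x₀ := h1
          _ ≤ |c| * (m l x₀ + 1) := by nlinarith
          _ < ε / (m l x₀ + 1) * (m l x₀ + 1) := by
            apply mul_lt_mul_of_pos_right hc; linarith
          _ = ε := by field_simp }
  letI τ : TopologicalSpace X := B.topology
  haveI hTG : @IsTopologicalAddGroup X τ _ := B.toAddGroupFilterBasis.isTopologicalAddGroup
  haveI hSM : @ContinuousSMul ℝ X _ _ τ := B.continuousSMul
  have hbasis0 : (@nhds X τ 0).HasBasis (fun S : Set X => S ∈ B.toAddGroupFilterBasis) id :=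
    B.toAddGroupFilterBasis.nhds_zero_hasBasis
  have hbasis : (@nhds X τ 0).HasBasis good V := by
    refine hbasis0.to_hasBasis ?_ ?_
    · rintro _ ⟨p, hp, rfl⟩
      exact ⟨p, hp, le_refl _⟩
    · intro p hp
      exact ⟨V p, ⟨p, hp, rfl⟩, le_refl _⟩
  have hT2 : @T2Space X τ := by
    apply IsTopologicalAddGroup.t2Space_of_zero_sep
    intro x hx
    obtain ⟨l, hl⟩ : ∃ l, m l x ≠ 0 := by
      by_contra h
      push_neg at h
      exact hx (hsep x h)
    have hpos : 0 < m l x := lt_of_le_of_ne (um_m_nonneg hadd hsmul l x) (Ne.symm hl)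
    refine ⟨V (m l x, |x|, l), hbasis.mem_of_mem ⟨hpos, abs_nonneg x, fun h => hx (um_abs_eq_zero h)⟩, ?_⟩
    intro hmem
    have : m l (|x| ⊓ |x|) < m l x := hmem
    rw [inf_idem, um_m_abs hmono] at this
    exact lt_irrefl _ this
  refine ⟨τ, hT2, hTG, hSM, hbasis, solid, ?_⟩
  intro α F x
  rw [hbasis.tendsto_right_iff]
  constructor
  · intro h u hu l
    rcases eq_or_ne u 0 with rfl | hne
    · have : (fun a => m l (|x a| ⊓ 0)) = fun _ => 0 := by
        funext a
        rw [inf_eq_right.mpr (abs_nonneg _), um_m_zero hsmul l]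
      rw [this]
      exact tendsto_const_nhds
    · rw [Metric.tendsto_nhds]
      intro ε hε
      filter_upwards [h (ε, u, l) ⟨hε, hu, hne⟩] with a ha
      have ha' : m l (|x a| ⊓ u) < ε := ha
      rw [Real.dist_eq, sub_zero, abs_of_nonneg (um_m_nonneg hadd hsmul l _)]
      exact ha'
  · rintro h ⟨ε, u, l⟩ ⟨hε, hu, hne⟩
    have := h u hu l
    have hev : ∀ᶠ a in F, m l (|x a| ⊓ u) < ε := this (Iio_mem_nhds hε)
    exact hev
end

section
/- In the MNVL X = C[0,1] equipped with the lattice seminorms m_{[a,b]}(f) = (1/(b-a)) ∫_a^b |f(t)| dt over all subintervals [a,b] ⊆ [0,1] with a < b, the sequence f_n defined by f_n(x) = n on [0, 1/n], f_n(x) = n²(1-n)x + n² on [1/n, 1/(n-1)], and f_n(x) = 0 on [1/(n-1), 1] (for n ≥ 2) is um-convergent to 0 but not m-convergent to 0. -/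
open Filter Topology

/-- The lattice seminorm `m_{[a,b]}(g) = (b-a)⁻¹ ∫_a^b |g(t)| dt` on `C([0,1], ℝ)`. -/
noncomputable def msem (a b : ℝ) (g : C(Set.Icc (0:ℝ) 1, ℝ)) : ℝ :=
  (b - a)⁻¹ * ∫ t in a..b, |g (Set.projIcc 0 1 zero_le_one t)|

/-- The sequence `f_n` from the paper: `f_n = n` on `[0, 1/n]`, affine
(`n²(1-n)x + n²`) on `[1/n, 1/(n-1)]`, and `0` on `[1/(n-1), 1]`; written in closed form
as `min n (max 0 (n²(1-n)x + n²))`. -/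
noncomputable def fseq (n : ℕ) : C(Set.Icc (0:ℝ) 1, ℝ) :=
  ⟨fun x => min (n : ℝ) (max 0 ((n : ℝ)^2 * (1 - (n : ℝ)) * (x : ℝ) + (n : ℝ)^2)), by
    fun_prop⟩

lemma fseq_eq_n {n : ℕ} (hn : 1 ≤ n) (x : Set.Icc (0:ℝ) 1) (hx : (n : ℝ) * (x : ℝ) ≤ 1) :
    fseq n x = n := by
  have hn1 : (1 : ℝ) ≤ (n : ℝ) := by exact_mod_cast hn
  have hx0 : (0 : ℝ) ≤ (x : ℝ) := x.2.1
  have key : (n : ℝ) ≤ (n : ℝ)^2 * (1 - (n : ℝ)) * (x : ℝ) + (n : ℝ)^2 := by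
    nlinarith [mul_nonneg (sub_nonneg.mpr hn1) (sub_nonneg.mpr hx)]
  show min (n : ℝ) (max 0 (_ : ℝ)) = n
  rw [max_eq_right (le_trans (by linarith) key), min_eq_left key]

lemma fseq_eq_zero {n : ℕ} (x : Set.Icc (0:ℝ) 1) (hx : 1 ≤ ((n : ℝ) - 1) * (x : ℝ)) :
    fseq n x = 0 := by
  have key : (n : ℝ)^2 * (1 - (n : ℝ)) * (x : ℝ) + (n : ℝ)^2 ≤ 0 := by
    nlinarith [sq_nonneg (n : ℝ)]
  show min (n : ℝ) (max 0 (_ : ℝ)) = 0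
  rw [max_eq_left key, min_eq_right (by positivity)]

lemma continuous_integrand (g : C(Set.Icc (0:ℝ) 1, ℝ)) :
    Continuous (fun t : ℝ => |g (Set.projIcc 0 1 zero_le_one t)|) :=
  (g.continuous.comp continuous_projIcc).abs

lemma msem_ge_one {n : ℕ} (hn : 1 ≤ n) : 1 ≤ msem 0 1 (fseq n) := by
  have hnpos : (0 : ℝ) < n := by exact_mod_cast hn
  have hinv : (0:ℝ) < (n : ℝ)⁻¹ := by positivity
  have hinvle : (n : ℝ)⁻¹ ≤ 1 := by
    rw [inv_le_one_iff₀]; right; exact_mod_cast hn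
  have hint : ∀ a b : ℝ, IntervalIntegrable
      (fun t : ℝ => |fseq n (Set.projIcc 0 1 zero_le_one t)|) MeasureTheory.volume a b :=
    fun a b => (continuous_integrand (fseq n)).intervalIntegrable a b
  have hsplit : ∫ t in (0:ℝ)..1, |fseq n (Set.projIcc 0 1 zero_le_one t)| =
      (∫ t in (0:ℝ)..(n : ℝ)⁻¹, |fseq n (Set.projIcc 0 1 zero_le_one t)|)
      + ∫ t in ((n:ℝ)⁻¹)..1, |fseq n (Set.projIcc 0 1 zero_le_one t)| :=
    (intervalIntegral.integral_add_adjacent_intervals (hint _ _) (hint _ _)).symm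
  have h1 : ∫ t in (0:ℝ)..(n : ℝ)⁻¹, |fseq n (Set.projIcc 0 1 zero_le_one t)| = 1 := by
    rw [intervalIntegral.integral_congr (g := fun _ => (n : ℝ)) ?_]
    · rw [intervalIntegral.integral_const, smul_eq_mul]
      field_simp
      ring
    · intro t ht
      rw [Set.uIcc_of_le hinv.le] at ht
      have ht0 : 0 ≤ t := ht.1
      have ht1 : t ≤ 1 := le_trans ht.2 hinvle
      show |(fseq n) (Set.projIcc 0 1 zero_le_one t)| = (n : ℝ)
      rw [Set.projIcc_of_mem _ ⟨ht0, ht1⟩]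
      have : (n : ℝ) * t ≤ 1 := by
        calc (n : ℝ) * t ≤ (n : ℝ) * (n : ℝ)⁻¹ := by
              exact mul_le_mul_of_nonneg_left ht.2 hnpos.le
          _ = 1 := mul_inv_cancel₀ hnpos.ne'
      rw [fseq_eq_n hn _ this]
      exact abs_of_nonneg hnpos.le
  have h2 : 0 ≤ ∫ t in ((n:ℝ)⁻¹)..1, |fseq n (Set.projIcc 0 1 zero_le_one t)| :=
    intervalIntegral.integral_nonneg hinvle (fun t _ => abs_nonneg _)
  simp only [msem, sub_zero, inv_one, one_mul, hsplit, h1]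
  linarith

/-- In the MNVL `C[0,1]` with the seminorms `m_{[a,b]}`, the sequence `f_n`
um-converges to `0` but does not m-converge to `0`. -/
theorem stmt6 :
    (∀ u : C(Set.Icc (0:ℝ) 1, ℝ), 0 ≤ u →
      ∀ a b : ℝ, 0 ≤ a → a < b → b ≤ 1 →
        Tendsto (fun n : ℕ => msem a b (|fseq n| ⊓ u)) atTop (𝓝 0)) ∧
    ¬ (∀ a b : ℝ, 0 ≤ a → a < b → b ≤ 1 →
        Tendsto (fun n : ℕ => msem a b (fseq n)) atTop (𝓝 0)) := by
  constructor
  · intro u hu a b ha hab hb1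
    have hu' : ∀ x, 0 ≤ u x := fun x => hu x
    have key : Tendsto
        (fun n : ℕ => ∫ t in a..b, |(|fseq n| ⊓ u) (Set.projIcc 0 1 zero_le_one t)|)
        atTop (𝓝 0) := by
      have key' : Tendsto
          (fun n : ℕ => ∫ t in a..b, |(|fseq n| ⊓ u) (Set.projIcc 0 1 zero_le_one t)|)
          atTop (𝓝 (∫ _t in a..b, (0:ℝ))) := ?_
      · simpa using key'
      apply intervalIntegral.tendsto_integral_filter_of_dominated_convergence
        (bound := fun _ => ‖u‖)
      · exact Eventually.of_forall fun n =>
          (continuous_integrand _).aestronglyMeasurable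
      · refine Eventually.of_forall fun n => MeasureTheory.ae_of_all _ fun t _ => ?_
        set x := Set.projIcc 0 1 zero_le_one t
        have h1 : (|fseq n| ⊓ u) x = min (|fseq n| x) (u x) := rfl
        have h2 : (0:ℝ) ≤ min (|fseq n| x) (u x) := by
          apply le_min _ (hu' x)
          show (0:ℝ) ≤ |fseq n x|
          exact abs_nonneg _
        rw [Real.norm_eq_abs, h1, abs_of_nonneg h2, abs_of_nonneg h2]
        calc min (|fseq n| x) (u x) ≤ u x := min_le_right _ _
          _ ≤ |u x| := le_abs_self _
          _ ≤ ‖u‖ := u.norm_coe_le_norm x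
      · exact intervalIntegrable_const
      · refine MeasureTheory.ae_of_all _ fun t ht => ?_
        rw [Set.uIoc_of_le hab.le] at ht
        have ht0 : 0 < t := lt_of_le_of_lt ha ht.1
        have ht1 : t ≤ 1 := le_trans ht.2 hb1
        have hmem : t ∈ Set.Icc (0:ℝ) 1 := ⟨ht0.le, ht1⟩
        rw [show Set.projIcc 0 1 zero_le_one t = ⟨t, hmem⟩ from Set.projIcc_of_mem _ hmem]
        apply Tendsto.congr' (f₁ := fun _ => (0:ℝ)) _ tendsto_const_nhds
        have hN : ∃ N : ℕ, 1 ≤ ((N : ℝ) - 1) * t := by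
          obtain ⟨N, hN⟩ := exists_nat_ge (1 / t + 1)
          refine ⟨N, ?_⟩
          have : 1 / t ≤ (N : ℝ) - 1 := by linarith
          calc (1:ℝ) = (1 / t) * t := by field_simp
            _ ≤ ((N : ℝ) - 1) * t := mul_le_mul_of_nonneg_right this ht0.le
        obtain ⟨N, hN⟩ := hN
        filter_upwards [eventually_ge_atTop N] with n hn
        have hn' : 1 ≤ ((n : ℝ) - 1) * t := by
          refine le_trans hN (mul_le_mul_of_nonneg_right ?_ ht0.le)
          have : (N : ℝ) ≤ n := by exact_mod_cast hn
          linarith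
        have hz : fseq n ⟨t, hmem⟩ = 0 := fseq_eq_zero _ hn'
        have : (|fseq n| ⊓ u) ⟨t, hmem⟩ = min |fseq n ⟨t, hmem⟩| (u ⟨t, hmem⟩) := rfl
        rw [this, hz, abs_zero, min_eq_left (hu' _), abs_zero]
    have : Tendsto (fun n : ℕ => msem a b (|fseq n| ⊓ u)) atTop (𝓝 ((b - a)⁻¹ * 0)) :=
      key.const_mul _
    simpa using this
  · intro h
    have h01 := h 0 1 le_rfl one_pos le_rfl
    have hev := (h01.eventually (gt_mem_nhds one_pos)).and (eventually_ge_atTop 1)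
    obtain ⟨n, hlt, hn⟩ := hev.exists
    exact absurd (msem_ge_one hn) (not_le.mpr hlt)
end

section
/- Let (X, M) be a multi-normed vector lattice and A ⊆ X an m-bounded subset. Then the um-closure of A is m-bounded; more precisely, for each λ, sup{m_λ(x) : x in the um-closure of A} ≤ sup{m_λ(a) : a ∈ A}. -/
open Filter Topology

/-- The um-topology generated by a family of lattice seminorms. -/
def umTop {X : Type*} [AddCommGroup X] [Lattice X] {Λ : Type*} (m : Λ → X → ℝ) :
    TopologicalSpace X :=
  TopologicalSpace.generateFrom
    {s | ∃ (z : X) (ε : ℝ) (l : Λ) (u : X), 0 < ε ∧ 0 ≤ u ∧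
          s = {y : X | m l (|y - z| ⊓ u) < ε}}

/-- In an MNVL, the um-closure of an m-bounded set `A` is m-bounded;
more precisely, any bound `M` for `m l` on `A` also bounds `m l` on the um-closure. -/
theorem stmt11 {X : Type*} [AddCommGroup X] [Lattice X]
    [CovariantClass X X (· + ·) (· ≤ ·)] [Module ℝ X]
    {Λ : Type*} (m : Λ → X → ℝ)
    (hadd : ∀ l (x y : X), m l (x + y) ≤ m l x + m l y)
    (hsmul : ∀ l (c : ℝ) (x : X), m l (c • x) = |c| * m l x)
    (hmono : ∀ l (x y : X), |x| ≤ |y| → m l x ≤ m l y)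
    (hsep : ∀ x : X, (∀ l, m l x = 0) → x = 0)
    (hdir : ∀ l₁ l₂, ∃ l₃, ∀ x : X, m l₁ x ≤ m l₃ x ∧ m l₂ x ≤ m l₃ x)
    (A : Set X) (hAbdd : ∀ l, ∃ M : ℝ, ∀ a ∈ A, m l a ≤ M) :
    (∀ l, ∃ M : ℝ, ∀ x ∈ @closure X (umTop m) A, m l x ≤ M) ∧
    (∀ (l : Λ) (M : ℝ), (∀ a ∈ A, m l a ≤ M) →
        ∀ x ∈ @closure X (umTop m) A, m l x ≤ M) := by
  have hm0 : ∀ l, m l (0 : X) = 0 := by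
    intro l
    have := hsmul l 0 0
    simpa using this
  have key : ∀ (l : Λ) (M : ℝ), (∀ a ∈ A, m l a ≤ M) →
      ∀ x ∈ @closure X (umTop m) A, m l x ≤ M := by
    intro l M hM x hx
    letI : TopologicalSpace X := umTop m
    refine le_of_forall_pos_le_add ?_
    intro ε hε
    -- the basic open set around x
    set s : Set X := {y : X | m l (|y - x| ⊓ |x|) < ε} with hs
    have hopen : IsOpen[umTop m] s :=
      TopologicalSpace.GenerateOpen.basic s ⟨x, ε, l, |x|, hε, abs_nonneg x, rfl⟩
    have hxs : x ∈ s := by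
      simp only [hs, Set.mem_setOf_eq, sub_self, abs_zero]
      have h0 : (0 : X) ⊓ |x| = 0 := inf_eq_left.2 (abs_nonneg x)
      rw [h0, hm0]
      exact hε
    obtain ⟨a, has, haA⟩ := mem_closure_iff.1 hx s hopen hxs
    -- lattice inequality: |x| ≤ (|a - x| ⊓ |x|) + |a|
    have h1 : |x| - |a| ≤ |a - x| ⊓ |x| := by
      refine le_inf ?_ ?_
      · have h0 : |x| ≤ |x - a| + |a| := by
          have := abs_add_le (x - a) a
          simpa using this
        calc |x| - |a| ≤ |x - a| := sub_le_iff_le_add.2 h0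
          _ = |a - x| := abs_sub_comm x a
      · exact sub_le_self _ (abs_nonneg a)
    have h2 : |x| ≤ (|a - x| ⊓ |x|) + |a| := sub_le_iff_le_add.1 h1
    have hnn : (0 : X) ≤ (|a - x| ⊓ |x|) + |a| :=
      add_nonneg (le_inf (abs_nonneg _) (abs_nonneg _)) (abs_nonneg a)
    have h3 : m l x ≤ m l ((|a - x| ⊓ |x|) + |a|) := by
      apply hmono
      rwa [abs_of_nonneg hnn]
    have h4 : m l ((|a - x| ⊓ |x|) + |a|) ≤ m l (|a - x| ⊓ |x|) + m l |a| := hadd _ _ _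
    have h5 : m l |a| ≤ M := by
      have : m l |a| ≤ m l a := hmono _ _ _ (by rw [abs_abs])
      exact this.trans (hM a haA)
    have h6 : m l (|a - x| ⊓ |x|) < ε := has
    linarith
  refine ⟨?_, key⟩
  intro l
  obtain ⟨M, hM⟩ := hAbdd l
  exact ⟨M, key l M hM⟩
end

section
/- Let (X, M) be a multi-normed vector lattice. If x_α is an increasing net in X that um-converges to x, then x_α ↑ x (x is the supremum of the net) and x_α m-converges to x. -/
open Filter Topology

/-- In an MNVL, if an increasing net `x_α` um-converges to `x`, then
`x_α ↑ x` (i.e. `x` is the supremum of the net) and `x_α` m-converges to `x`. -/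
theorem stmt12 {X : Type*} [AddCommGroup X] [Lattice X]
    [CovariantClass X X (· + ·) (· ≤ ·)] [Module ℝ X]
    {Λ : Type*} (m : Λ → X → ℝ)
    (hadd : ∀ l (x y : X), m l (x + y) ≤ m l x + m l y)
    (hsmul : ∀ l (c : ℝ) (x : X), m l (c • x) = |c| * m l x)
    (hmono : ∀ l (x y : X), |x| ≤ |y| → m l x ≤ m l y)
    (hsep : ∀ x : X, (∀ l, m l x = 0) → x = 0)
    (hdir : ∀ l₁ l₂, ∃ l₃, ∀ x : X, m l₁ x ≤ m l₃ x ∧ m l₂ x ≤ m l₃ x)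
    {α : Type*} [Preorder α] [Nonempty α] [IsDirected α (· ≤ ·)]
    (x : α → X) (hmonot : Monotone x) (x₀ : X)
    (hum : ∀ u : X, 0 ≤ u → ∀ l, Tendsto (fun a => m l (|x a - x₀| ⊓ u)) atTop (𝓝 0)) :
    IsLUB (Set.range x) x₀ ∧
    ∀ l, Tendsto (fun a => m l (x a - x₀)) atTop (𝓝 0) := by
  haveI : (atTop : Filter α).NeBot := atTop_neBot_iff.mpr ⟨‹_›, ‹_›⟩
  -- Step 1: x₀ is an upper bound
  have hub : ∀ a, x a ≤ x₀ := by
    intro a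
    set u := (x a - x₀) ⊔ 0 with hu
    have hu0 : 0 ≤ u := le_sup_right
    have key : ∀ l, m l u = 0 := by
      intro l
      have h1 := hum u hu0 l
      have h2 : (fun b => m l (|x b - x₀| ⊓ u)) =ᶠ[atTop] fun _ => m l u := by
        filter_upwards [eventually_ge_atTop a] with b hb
        have hle : u ≤ |x b - x₀| := by
          have h3 : x a - x₀ ≤ x b - x₀ := sub_le_sub_right (hmonot hb) _
          calc u ≤ (x b - x₀) ⊔ 0 := sup_le_sup_right h3 0
            _ ≤ |x b - x₀| := sup_le (le_abs_self _) (abs_nonneg _)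
        rw [inf_eq_right.mpr hle]
      exact tendsto_nhds_unique tendsto_const_nhds (h1.congr' h2)
    have hu0' : u = 0 := hsep u key
    have : x a - x₀ ≤ 0 := sup_eq_right.mp (hu.symm.trans hu0')
    exact sub_nonpos.mp this
  -- Step 2: x₀ is the least upper bound
  have hlub : IsLUB (Set.range x) x₀ := by
    constructor
    · rintro _ ⟨a, rfl⟩; exact hub a
    · intro y hy
      set u := (x₀ - y) ⊔ 0 with hu
      have hu0 : 0 ≤ u := le_sup_right
      have key : ∀ l, m l u = 0 := by
        intro l
        have h1 := hum u hu0 l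
        have h2 : (fun b => m l (|x b - x₀| ⊓ u)) =ᶠ[atTop] fun _ => m l u := by
          filter_upwards [] with b
          have hle : u ≤ |x b - x₀| := by
            have h3 : x₀ - y ≤ x₀ - x b := sub_le_sub_left (hy ⟨b, rfl⟩) _
            calc u ≤ (x₀ - x b) ⊔ 0 := sup_le_sup_right h3 0
              _ ≤ |x₀ - x b| := sup_le (le_abs_self _) (abs_nonneg _)
              _ = |x b - x₀| := abs_sub_comm _ _
          rw [inf_eq_right.mpr hle]
        exact tendsto_nhds_unique tendsto_const_nhds (h1.congr' h2)
      have hu0' : u = 0 := hsep u key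
      have : x₀ - y ≤ 0 := sup_eq_right.mp (hu.symm.trans hu0')
      exact sub_nonpos.mp this
  refine ⟨hlub, fun l => ?_⟩
  -- Step 3: m-convergence
  obtain ⟨a₀⟩ := ‹Nonempty α›
  have hu0 : 0 ≤ x₀ - x a₀ := sub_nonneg.mpr (hub a₀)
  have h1 := hum (x₀ - x a₀) hu0 l
  refine h1.congr' ?_
  filter_upwards [eventually_ge_atTop a₀] with b hb
  have h2 : |x b - x₀| = x₀ - x b := by
    rw [abs_sub_comm, abs_of_nonneg (sub_nonneg.mpr (hub b))]
  have h3 : x₀ - x b ≤ x₀ - x a₀ := sub_le_sub_left (hmonot hb) _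
  rw [h2, inf_eq_left.mpr h3]
  have : m l (x₀ - x b) = m l (x b - x₀) := by
    have : |x₀ - x b| = |x b - x₀| := abs_sub_comm _ _
    exact le_antisymm (hmono l _ _ this.le) (hmono l _ _ this.ge)
  exact this
end

section
/- Let (X, M) be a multi-normed vector lattice with the pre-Lebesgue property, and let x_n be a pairwise disjoint sequence of positive elements which is not m-null. Then the sequence of partial sums s_n = Σ_{k=1}^n x_k is um-Cauchy but not um-convergent. -/
open Filter Topology

section aux
variable {X : Type*} [AddCommGroup X] [Lattice X]
    [CovariantClass X X (· + ·) (· ≤ ·)]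

lemma my_inf_add_le (a b u : X) (ha : 0 ≤ a) (hb : 0 ≤ b) (hu : 0 ≤ u) :
    (a + b) ⊓ u ≤ a ⊓ u + b ⊓ u := by
  have h1 : (a + b) ⊓ u ≤ a ⊓ u + b := by
    calc (a + b) ⊓ u ≤ (a + b) ⊓ (u + b) :=
          inf_le_inf_left _ (le_add_of_nonneg_right hb)
      _ = a ⊓ u + b := by rw [← inf_add a u b]
  have h2 : (a + b) ⊓ u ≤ a ⊓ u + u :=
    le_add_of_nonneg_of_le (le_inf ha hu) inf_le_right
  calc (a + b) ⊓ u ≤ (a ⊓ u + b) ⊓ (a ⊓ u + u) := le_inf h1 h2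
    _ = a ⊓ u + b ⊓ u := (add_inf b u (a ⊓ u)).symm

lemma my_disjoint_inf_add (a b u : X) (ha : 0 ≤ a) (hb : 0 ≤ b) (hu : 0 ≤ u)
    (hab : a ⊓ b = 0) : (a + b) ⊓ u = a ⊓ u + b ⊓ u := by
  refine le_antisymm (my_inf_add_le a b u ha hb hu) ?_
  have hd : (a ⊓ u) ⊓ (b ⊓ u) = 0 := by
    apply le_antisymm
    · calc (a ⊓ u) ⊓ (b ⊓ u) ≤ a ⊓ b := inf_le_inf inf_le_left inf_le_left
        _ = 0 := hab
    · exact le_inf (le_inf ha hu) (le_inf hb hu)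
  have hsum : a ⊓ u + b ⊓ u = (a ⊓ u) ⊔ (b ⊓ u) := by
    have h := inf_add_sup (a ⊓ u) (b ⊓ u)
    rw [hd, zero_add] at h
    exact h.symm
  refine le_inf (add_le_add inf_le_left inf_le_left) ?_
  rw [hsum]
  exact sup_le inf_le_right inf_le_right
lemma my_sum_nonneg {f : ℕ → X} {F : Finset ℕ} (h : ∀ k, 0 ≤ f k) :
    0 ≤ ∑ k ∈ F, f k := by
  classical
  induction F using Finset.induction_on with
  | empty => simp
  | @insert a F ha ih =>
    rw [Finset.sum_insert ha]
    exact add_nonneg (h a) ih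
end aux

/-- In an MNVL with the pre-Lebesgue property, if `x_n` is a disjoint
sequence of positive elements that is not m-null, then the sequence of partial sums
`s_n = Σ_{k<n} x_k` is um-Cauchy but not um-convergent. -/
theorem stmt13 {X : Type*} [AddCommGroup X] [Lattice X]
    [CovariantClass X X (· + ·) (· ≤ ·)] [Module ℝ X]
    {Λ : Type*} (m : Λ → X → ℝ)
    (hadd : ∀ l (x y : X), m l (x + y) ≤ m l x + m l y)
    (hsmul : ∀ l (c : ℝ) (x : X), m l (c • x) = |c| * m l x)
    (hmono : ∀ l (x y : X), |x| ≤ |y| → m l x ≤ m l y)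
    (hsep : ∀ x : X, (∀ l, m l x = 0) → x = 0)
    (hdir : ∀ l₁ l₂, ∃ l₃, ∀ x : X, m l₁ x ≤ m l₃ x ∧ m l₂ x ≤ m l₃ x)
    -- pre-Lebesgue property
    (hpreLeb : ∀ (y : ℕ → X) (b : X), Monotone y → (∀ n, 0 ≤ y n) → (∀ n, y n ≤ b) →
        ∀ l, ∀ ε > (0:ℝ), ∃ N, ∀ i ≥ N, ∀ j ≥ N, m l (y i - y j) < ε)
    (x : ℕ → X) (hxpos : ∀ n, 0 ≤ x n)
    (hdisj : ∀ i j, i ≠ j → x i ⊓ x j = 0)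
    (hnotnull : ¬ ∀ l, Tendsto (fun n => m l (x n)) atTop (𝓝 0)) :
    -- `s n = Σ_{k<n} x k` is um-Cauchy ...
    (∀ u : X, 0 ≤ u → ∀ l, ∀ ε > (0:ℝ), ∃ N, ∀ i ≥ N, ∀ j ≥ N,
        m l (|(∑ k ∈ Finset.range i, x k) - ∑ k ∈ Finset.range j, x k| ⊓ u) < ε) ∧
    -- ... but not um-convergent
    ¬ ∃ s : X, ∀ u : X, 0 ≤ u → ∀ l,
        Tendsto (fun n => m l (|(∑ k ∈ Finset.range n, x k) - s| ⊓ u)) atTop (𝓝 0) := by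
  classical
  -- basic facts about m
  have hm0 : ∀ l, m l (0 : X) = 0 := by
    intro l
    have := hsmul l 0 0
    simpa using this
  have hmneg : ∀ l (z : X), m l (-z) = m l z := by
    intro l z
    have := hsmul l (-1) z
    simpa using this
  have hmnonneg : ∀ l (z : X), 0 ≤ m l z := by
    intro l z
    have h := hadd l z (-z)
    rw [add_neg_cancel, hm0, hmneg] at h
    linarith
  set S : ℕ → X := fun n => ∑ k ∈ Finset.range n, x k with hS
  have hSpos : ∀ n, 0 ≤ S n := by
    intro n
    simp only [hS]
    exact my_sum_nonneg hxpos
  have hSmono : Monotone S := by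
    intro a b hab
    simp only [hS]
    rw [← sub_nonneg, ← Finset.sum_Ico_eq_sub _ hab]
    exact my_sum_nonneg hxpos
  -- disjoint sums truncate termwise
  have hFdisj : ∀ (F : Finset ℕ) (j : ℕ), j ∉ F → (∑ k ∈ F, x k) ⊓ x j = 0 := by
    intro F j hj
    induction F using Finset.induction_on with
    | empty =>
      simp only [Finset.sum_empty]
      exact inf_eq_left.2 (hxpos j)
    | @insert a F ha ih =>
      have hj1 : a ≠ j := fun h => hj (h ▸ Finset.mem_insert_self a F)
      have hj2 : j ∉ F := fun h => hj (Finset.mem_insert_of_mem h)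
      rw [Finset.sum_insert ha]
      apply le_antisymm
      · calc (x a + ∑ k ∈ F, x k) ⊓ x j
            ≤ x a ⊓ x j + (∑ k ∈ F, x k) ⊓ x j :=
              my_inf_add_le _ _ _ (hxpos a) (my_sum_nonneg hxpos) (hxpos j)
          _ = 0 := by rw [hdisj a j hj1, ih hj2, add_zero]
      · exact le_inf (add_nonneg (hxpos a) (my_sum_nonneg hxpos)) (hxpos j)
  have htrunc : ∀ (u : X), 0 ≤ u → ∀ (F : Finset ℕ),
      (∑ k ∈ F, x k) ⊓ u = ∑ k ∈ F, (x k ⊓ u) := by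
    intro u hu F
    induction F using Finset.induction_on with
    | empty =>
      simp only [Finset.sum_empty]
      exact inf_eq_left.2 hu
    | @insert a F ha ih =>
      rw [Finset.sum_insert ha, Finset.sum_insert ha, ← ih]
      exact my_disjoint_inf_add _ _ _ (hxpos a)
        (my_sum_nonneg hxpos) hu (by rw [inf_comm]; exact hFdisj F a ha)
  constructor
  · -- um-Cauchy
    intro u hu l ε hε
    set T : ℕ → X := fun n => ∑ k ∈ Finset.range n, (x k ⊓ u) with hT
    have hTpos : ∀ n, 0 ≤ T n := by
      intro n
      simp only [hT]
      exact my_sum_nonneg fun k => le_inf (hxpos k) hu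
    have hTmono : Monotone T := by
      intro a b hab
      simp only [hT]
      rw [← sub_nonneg, ← Finset.sum_Ico_eq_sub _ hab]
      exact my_sum_nonneg fun k => le_inf (hxpos k) hu
    have hTb : ∀ n, T n ≤ u := by
      intro n
      rw [hT]
      calc ∑ k ∈ Finset.range n, (x k ⊓ u)
          = (∑ k ∈ Finset.range n, x k) ⊓ u := (htrunc u hu _).symm
        _ ≤ u := inf_le_right
    obtain ⟨N, hN⟩ := hpreLeb T u hTmono hTpos hTb l ε hε
    refine ⟨N, fun i hi j hj => ?_⟩
    -- wlog j ≤ i via a key claim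
    have key : ∀ p q : ℕ, q ≤ p → |S p - S q| ⊓ u = T p - T q := by
      intro p q hqp
      have h1 : S q ≤ S p := hSmono hqp
      have h2 : |S p - S q| = S p - S q := abs_of_nonneg (sub_nonneg.2 h1)
      have h3 : S p - S q = ∑ k ∈ Finset.Ico q p, x k := by
        rw [hS]
        exact (Finset.sum_Ico_eq_sub _ hqp).symm
      have h4 : T p - T q = ∑ k ∈ Finset.Ico q p, (x k ⊓ u) := by
        rw [hT]
        exact (Finset.sum_Ico_eq_sub _ hqp).symm
      rw [h2, h3, h4]
      exact htrunc u hu _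
    rcases le_total j i with hji | hij
    · rw [show (|(∑ k ∈ Finset.range i, x k) - ∑ k ∈ Finset.range j, x k| ⊓ u)
          = T i - T j from key i j hji]
      exact hN i hi j hj
    · have : |(∑ k ∈ Finset.range i, x k) - ∑ k ∈ Finset.range j, x k| ⊓ u
          = T j - T i := by
        rw [abs_sub_comm]
        exact key j i hij
      rw [this]
      exact hN j hj i hi
  · -- not um-convergent
    rintro ⟨s, hconv⟩
    -- first: S k ≤ s for all k
    have hSle : ∀ k, S k ≤ s := by
      intro k
      set u : X := (S k - s) ⊔ 0 with hu
      have hu0 : 0 ≤ u := le_sup_right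
      have hule : ∀ n, k ≤ n → u ≤ |S n - s| ⊓ u := by
        intro n hn
        refine le_inf ?_ le_rfl
        calc u = (S k - s) ⊔ 0 := hu
          _ ≤ (S n - s) ⊔ 0 := sup_le_sup_right (sub_le_sub_right (hSmono hn) s) 0
          _ ≤ |S n - s| := sup_le (le_abs_self _) (abs_nonneg _)
      have hmu : ∀ l, m l u = 0 := by
        intro l
        have hle0 : m l u ≤ 0 := by
          refine ge_of_tendsto (hconv u hu0 l) ?_
          filter_upwards [eventually_ge_atTop k] with n hn
          apply hmono
          rw [abs_of_nonneg hu0,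
            abs_of_nonneg (le_inf (abs_nonneg _) hu0)]
          exact hule n hn
        exact le_antisymm hle0 (hmnonneg l u)
      have : u = 0 := hsep u hmu
      have : S k - s ≤ 0 := by
        calc S k - s ≤ u := le_sup_left
          _ = 0 := this
      exact sub_nonpos.1 this
    have hs0 : (0:X) ≤ s := by
      have h0 := hSle 0
      simp only [hS, Finset.range_zero, Finset.sum_empty] at h0
      exact h0
    -- each x n ≤ s
    have hxle : ∀ n, x n ≤ s := by
      intro n
      calc x n ≤ S (n + 1) := by
            simp only [hS]
            rw [Finset.sum_range_succ]
            exact le_add_of_nonneg_left (my_sum_nonneg hxpos)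
        _ ≤ s := hSle (n + 1)
    apply hnotnull
    intro l
    -- bound m l (x n) by truncated quantities tending to 0
    have hbound : ∀ n, m l (x n)
        ≤ m l (|S (n+1) - s| ⊓ s) + m l (|S n - s| ⊓ s) := by
      intro n
      have hxs : x n = x n ⊓ s := (inf_eq_left.2 (hxle n)).symm
      have h1 : x n ⊓ s ≤ (|S (n+1) - s| + |S n - s|) ⊓ s := by
        apply inf_le_inf_right
        have : x n = (S (n+1) - s) + (s - S n) := by
          simp only [hS, Finset.sum_range_succ]
          abel
        rw [this]
        exact add_le_add (le_abs_self _)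
          ((le_abs_self _).trans (le_of_eq (abs_sub_comm _ _)))
      have h2 : (|S (n+1) - s| + |S n - s|) ⊓ s
          ≤ |S (n+1) - s| ⊓ s + |S n - s| ⊓ s :=
        my_inf_add_le _ _ _ (abs_nonneg _) (abs_nonneg _) hs0
      have hle : x n ≤ |S (n+1) - s| ⊓ s + |S n - s| ⊓ s := by
        rw [hxs]; exact h1.trans h2
      calc m l (x n) ≤ m l (|S (n+1) - s| ⊓ s + |S n - s| ⊓ s) := by
            apply hmono
            rw [abs_of_nonneg (hxpos n), abs_of_nonneg]
            · exact hle
            · exact add_nonneg (le_inf (abs_nonneg _) hs0)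
                (le_inf (abs_nonneg _) hs0)
        _ ≤ m l (|S (n+1) - s| ⊓ s) + m l (|S n - s| ⊓ s) := hadd l _ _
    have hT1 : Tendsto (fun n => m l (|S n - s| ⊓ s)) atTop (𝓝 0) := hconv s hs0 l
    have hT2 : Tendsto (fun n => m l (|S (n+1) - s| ⊓ s)) atTop (𝓝 0) :=
      hT1.comp (tendsto_add_atTop_nat 1)
    have hsum : Tendsto
        (fun n => m l (|S (n+1) - s| ⊓ s) + m l (|S n - s| ⊓ s)) atTop (𝓝 0) := by
      simpa using hT2.add hT1
    exact squeeze_zero (fun n => hmnonneg l (x n)) hbound hsum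
end

section
/- Let (X, M) be a multi-normed vector lattice with the Lebesgue and Levi properties, and let A ⊆ X be m-bounded and um-closed. Then A is complete in the um-topology: every um-Cauchy net in A um-converges to an element of A. -/
open Filter Topology

set_option linter.unusedSectionVars false
set_option linter.unusedVariables false

universe u

namespace S15

variable {X : Type u} [AddCommGroup X] [Lattice X]

instance (priority := low) [CovariantClass X X (· + ·) (· ≤ ·)] :
    CovariantClass X X (Function.swap (· + ·)) (· ≤ ·) :=
  ⟨fun a b c h => by
    simp only [Function.swap]
    rw [add_comm b a, add_comm c a]
    exact add_le_add_right h a⟩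

section Lat
variable [CovariantClass X X (· + ·) (· ≤ ·)]

lemma pp_nonneg (a : X) : 0 ≤ a ⊔ 0 := le_sup_right

lemma le_pp (a : X) : a ≤ a ⊔ 0 := le_sup_left

lemma pp_le {a b : X} (h : a ≤ b) (h0 : 0 ≤ b) : a ⊔ 0 ≤ b := sup_le h h0

lemma pp_mono {a b : X} (h : a ≤ b) : a ⊔ 0 ≤ b ⊔ 0 := sup_le_sup_right h 0

lemma pp_eq_zero {a : X} (h : a ≤ 0) : a ⊔ 0 = 0 := sup_eq_right.2 h

lemma pp_le_abs (a : X) : a ⊔ 0 ≤ |a| := sup_le (le_abs_self a) (abs_nonneg a)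

lemma negneg {a b : X} (h : a ≤ b) : -b ≤ -a := by
  calc -b = -a + -b + a := by abel
  _ ≤ -a + -b + b := add_le_add_right h _
  _ = -a := by abel

lemma abs_eq_pp_add_pn (a : X) : |a| = (a ⊔ 0) + ((-a) ⊔ 0) := by
  have h1 : (a ⊔ 0) - (a ⊓ 0) = |0 - a| := sup_sub_inf_eq_abs_sub a 0
  have h2 : -(a ⊓ 0) = (-a) ⊔ 0 := by rw [neg_inf, neg_zero]
  rw [zero_sub, abs_neg] at h1
  rw [← h1, sub_eq_add_neg, h2]

lemma sub_inf_self_eq_pp (a b : X) : a - a ⊓ b = (a - b) ⊔ 0 := by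
  rw [sub_inf, sub_self, sup_comm]

/-- subadditivity of truncation -/
lemma trunc_subadd {p q u : X} (hp : 0 ≤ p) (hq : 0 ≤ q) (hu : 0 ≤ u) :
    (p + q) ⊓ u ≤ p ⊓ u + q ⊓ u := by
  have h : p ⊓ u + q ⊓ u = ((p + q) ⊓ (p + u)) ⊓ ((u + q) ⊓ (u + u)) := by
    rw [inf_add, add_inf, add_inf]
  rw [h]
  refine le_inf (le_inf inf_le_left ?_) (le_inf ?_ ?_)
  · exact inf_le_right.trans (le_add_of_nonneg_left hp)
  · exact inf_le_right.trans (le_add_of_nonneg_right hq)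
  · exact inf_le_right.trans (le_add_of_nonneg_left hu)

lemma abs_inf_sub_inf_le' {a b u : X} (ha : 0 ≤ a) (hb : 0 ≤ b) (hu : 0 ≤ u) :
    |a ⊓ u - b ⊓ u| ≤ |a - b| ⊓ u := by
  have key : ∀ c d : X, 0 ≤ c → 0 ≤ d → c ⊓ u - d ⊓ u ≤ |c - d| ⊓ u := by
    intro c d hc hd
    refine le_inf ?_ ?_
    · have h1 : c ≤ d + |c - d| := by
        rw [← sub_le_iff_le_add']
        exact le_abs_self _
      have h2 : c ⊓ u ≤ (d + |c - d|) ⊓ (u + |c - d|) :=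
        le_inf (inf_le_left.trans h1) (inf_le_right.trans (le_add_of_nonneg_right (abs_nonneg _)))
      rw [← inf_add] at h2
      exact sub_le_iff_le_add'.2 h2
    · have h3 : c ⊓ u - d ⊓ u ≤ u - 0 := sub_le_sub inf_le_right (le_inf hd hu)
      rwa [sub_zero] at h3
  have h1 := key a b ha hb
  have h2 := key b a hb ha
  rw [abs_sub_comm b a] at h2
  rw [abs_le']
  exact ⟨h1, by rw [neg_sub]; exact h2⟩

lemma trunc_piece {a w v : X} (hw : 0 ≤ w) (hv : 0 ≤ v) :
    a ⊓ w + ((a - w) ⊔ 0) ⊓ v ≤ a ⊓ (w + v) := by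
  refine le_inf ?_ ?_
  · have h1 : ((a - w) ⊔ 0) ⊓ v ≤ a - a ⊓ w := by
      rw [sub_inf_self_eq_pp]
      exact inf_le_left
    calc a ⊓ w + ((a - w) ⊔ 0) ⊓ v ≤ a ⊓ w + (a - a ⊓ w) := add_le_add_right h1 _
    _ = a := by abel
  · exact add_le_add inf_le_right inf_le_right

lemma pp_sub_pp_le (a b : X) : (a ⊔ 0) - (b ⊔ 0) ≤ (a - b) ⊔ 0 := by
  rw [sub_le_iff_le_add]
  refine sup_le ?_ ?_
  · calc a = (a - b) + b := by abel
    _ ≤ ((a - b) ⊔ 0) + (b ⊔ 0) := add_le_add le_sup_left le_sup_left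
  · exact add_nonneg (pp_nonneg _) (pp_nonneg _)

lemma abs_pp_sub_pp_le (a b : X) : |(a ⊔ 0) - (b ⊔ 0)| ≤ |a - b| := by
  rw [abs_le']
  constructor
  · exact (pp_sub_pp_le a b).trans (pp_le_abs _)
  · rw [neg_sub]
    refine (pp_sub_pp_le b a).trans ?_
    rw [abs_sub_comm a b]
    exact pp_le_abs _

lemma pabs_add (a b : X) : |a + b| ≤ |a| + |b| := by
  have h1 : a + b ≤ |a| + |b| := add_le_add (le_abs_self a) (le_abs_self b)
  have h2 : -(a + b) ≤ |a| + |b| := by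
    rw [neg_add]
    exact add_le_add (neg_le_abs a) (neg_le_abs b)
  exact abs_le'.2 ⟨h1, h2⟩

lemma pp_sub_pn (a : X) : (a ⊔ 0) - ((-a) ⊔ 0) = a := by
  have h2 : (-a) ⊔ 0 = -(a ⊓ 0) := by rw [neg_inf, neg_zero]
  rw [h2, sub_neg_eq_add, add_comm, inf_add_sup, add_zero]

end Lat

section Semi
variable [CovariantClass X X (· + ·) (· ≤ ·)] [Module ℝ X]
variable {Λ : Type*} (m : Λ → X → ℝ)

lemma mzero (hsmul : ∀ l (c : ℝ) (x : X), m l (c • x) = |c| * m l x) (l : Λ) : m l 0 = 0 := by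
  have := hsmul l 0 0
  simpa using this

lemma mneg (hmono : ∀ l (x y : X), |x| ≤ |y| → m l x ≤ m l y) (l : Λ) (v : X) :
    m l (-v) = m l v := by
  refine le_antisymm (hmono _ _ _ ?_) (hmono _ _ _ ?_) <;> rw [abs_neg]

lemma mabs (hmono : ∀ l (x y : X), |x| ≤ |y| → m l x ≤ m l y) (l : Λ) (v : X) :
    m l |v| = m l v := by
  refine le_antisymm (hmono _ _ _ ?_) (hmono _ _ _ ?_) <;> rw [abs_abs]

lemma mnonneg (hadd : ∀ l (x y : X), m l (x + y) ≤ m l x + m l y)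
    (hsmul : ∀ l (c : ℝ) (x : X), m l (c • x) = |c| * m l x)
    (hmono : ∀ l (x y : X), |x| ≤ |y| → m l x ≤ m l y) (l : Λ) (v : X) :
    0 ≤ m l v := by
  have h := hadd l v (-v)
  rw [add_neg_cancel, mzero m hsmul, mneg m hmono] at h
  linarith

lemma mmono0 (hmono : ∀ l (x y : X), |x| ≤ |y| → m l x ≤ m l y) (l : Λ) {a b : X}
    (ha : 0 ≤ a) (h : a ≤ b) : m l a ≤ m l b := by
  refine hmono l a b ?_
  rw [abs_of_nonneg ha, abs_of_nonneg (ha.trans h)]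
  exact h

end Semi

section RealAux

lemma real_le_of_forall_pos {a b : ℝ} (h : ∀ ε > (0:ℝ), a ≤ b + ε) : a ≤ b := by
  by_contra hc
  push_neg at hc
  have := h ((a - b) / 2) (by linarith)
  linarith

lemma real_eq_zero_of_forall_lt {a : ℝ} (h0 : 0 ≤ a) (h : ∀ ε > (0:ℝ), a < ε) : a = 0 := by
  by_contra hc
  have : 0 < a := lt_of_le_of_ne h0 (Ne.symm hc)
  exact absurd (h a this) (lt_irrefl a)

end RealAux

section FilterAux

variable {β : Type*} [Preorder β] [Nonempty β] [IsDirected β (· ≤ ·)]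

lemma ev_iff_eventually {p : β → Prop} :
    (∀ᶠ b in atTop, p b) ↔ ∃ N, ∀ b ≥ N, p b := by
  have hdir : Directed (· ≥ ·) (fun a : β => 𝓟 (Set.Ici a)) := by
    intro a b
    obtain ⟨c, hac, hbc⟩ := directed_of (· ≤ ·) a b
    exact ⟨c, principal_mono.2 fun x hx => hac.trans hx, principal_mono.2 fun x hx => hbc.trans hx⟩
  constructor
  · intro h
    rw [eventually_iff, atTop, mem_iInf_of_directed hdir] at h
    obtain ⟨N, hN⟩ := h
    exact ⟨N, fun b hb => hN hb⟩
  · rintro ⟨N, hN⟩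
    filter_upwards [mem_atTop N] using hN

lemma ev_and {p q : β → Prop} (hp : ∃ N, ∀ b ≥ N, p b) (hq : ∃ N, ∀ b ≥ N, q b) :
    ∃ N, ∀ b ≥ N, p b ∧ q b := by
  obtain ⟨N₁, h₁⟩ := hp
  obtain ⟨N₂, h₂⟩ := hq
  obtain ⟨N, hN₁, hN₂⟩ := directed_of (· ≤ ·) N₁ N₂
  exact ⟨N, fun b hb => ⟨h₁ b (hN₁.trans hb), h₂ b (hN₂.trans hb)⟩⟩

lemma tendsto_zero_iff_ev {f : β → ℝ} (h0 : ∀ b, 0 ≤ f b) :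
    Tendsto f atTop (𝓝 0) ↔ ∀ ε > (0:ℝ), ∃ N, ∀ b ≥ N, f b < ε := by
  rw [Metric.tendsto_nhds]
  constructor
  · intro h ε hε
    have := h ε hε
    rw [ev_iff_eventually] at this
    obtain ⟨N, hN⟩ := this
    refine ⟨N, fun b hb => ?_⟩
    have := hN b hb
    rwa [Real.dist_eq, sub_zero, abs_of_nonneg (h0 b)] at this
  · intro h ε hε
    rw [ev_iff_eventually]
    obtain ⟨N, hN⟩ := h ε hε
    refine ⟨N, fun b hb => ?_⟩
    rw [Real.dist_eq, sub_zero, abs_of_nonneg (h0 b)]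
    exact hN b hb

end FilterAux

section Wrap
variable [CovariantClass X X (· + ·) (· ≤ ·)] [Module ℝ X]
variable {Λ : Type*} (m : Λ → X → ℝ)

lemma levi_lub
    (hLevi : ∀ (α : Type u) [Preorder α] [Nonempty α] [IsDirected α (· ≤ ·)] (x : α → X),
        Monotone x → (∀ a, 0 ≤ x a) → (∀ l, ∃ M : ℝ, ∀ a, m l (x a) ≤ M) →
        ∃ s : X, IsLUB (Set.range x) s)
    {S : Set X} (hne : S.Nonempty) (hdirS : DirectedOn (· ≤ ·) S)
    (hpos : ∀ w ∈ S, 0 ≤ w) (hbdd : ∀ l, ∃ M : ℝ, ∀ w ∈ S, m l w ≤ M) :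
    ∃ s, IsLUB S s := by
  haveI : Nonempty ↥S := hne.to_subtype
  haveI : IsDirected ↥S (· ≤ ·) := ⟨fun a b => by
    obtain ⟨c, hc, h1, h2⟩ := hdirS a a.2 b b.2
    exact ⟨⟨c, hc⟩, h1, h2⟩⟩
  obtain ⟨s, hs⟩ := hLevi ↥S (fun w => (w : X)) (fun a b h => h) (fun a => hpos a a.2)
    (fun l => (hbdd l).imp fun M hM a => hM a a.2)
  rw [Subtype.range_coe] at hs
  exact ⟨s, hs⟩

lemma levi_glb
    (hadd : ∀ l (x y : X), m l (x + y) ≤ m l x + m l y)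
    (hmono : ∀ l (x y : X), |x| ≤ |y| → m l x ≤ m l y)
    (hLevi : ∀ (α : Type u) [Preorder α] [Nonempty α] [IsDirected α (· ≤ ·)] (x : α → X),
        Monotone x → (∀ a, 0 ≤ x a) → (∀ l, ∃ M : ℝ, ∀ a, m l (x a) ≤ M) →
        ∃ s : X, IsLUB (Set.range x) s)
    {S : Set X} (hne : S.Nonempty) (hdirS : DirectedOn (· ≥ ·) S)
    (hbdd : ∀ l, ∃ M : ℝ, ∀ w ∈ S, m l w ≤ M) :
    ∃ s, IsGLB S s := by
  obtain ⟨w₀, hw₀⟩ := hne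
  set S' : Set X := {w | w ∈ S ∧ w ≤ w₀} with hS'
  set T : Set X := (fun w => w₀ - w) '' S' with hT
  have hTne : T.Nonempty := ⟨w₀ - w₀, ⟨w₀, ⟨hw₀, le_refl _⟩, rfl⟩⟩
  have hTdir : DirectedOn (· ≤ ·) T := by
    rintro _ ⟨w₁, hw₁, rfl⟩ _ ⟨w₂, hw₂, rfl⟩
    obtain ⟨w₃, hw₃, h₁, h₂⟩ := hdirS w₁ hw₁.1 w₂ hw₂.1
    exact ⟨w₀ - w₃, ⟨w₃, ⟨hw₃, h₁.trans hw₁.2⟩, rfl⟩,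
      sub_le_sub_left h₁ _, sub_le_sub_left h₂ _⟩
  have hTpos : ∀ y ∈ T, 0 ≤ y := by
    rintro _ ⟨w, hw, rfl⟩
    exact sub_nonneg.2 hw.2
  have hTbdd : ∀ l, ∃ M : ℝ, ∀ y ∈ T, m l y ≤ M := by
    intro l
    obtain ⟨M, hM⟩ := hbdd l
    refine ⟨m l w₀ + M, ?_⟩
    rintro _ ⟨w, hw, rfl⟩
    have h1 : m l (w₀ - w) ≤ m l w₀ + m l (-w) := by
      have := hadd l w₀ (-w)
      rwa [← sub_eq_add_neg] at this
    rw [mneg m hmono] at h1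
    exact h1.trans (add_le_add_right (hM w hw.1) _)
  obtain ⟨t, ht⟩ := levi_lub m hLevi hTne hTdir hTpos hTbdd
  refine ⟨w₀ - t, ?_, ?_⟩
  · intro w hw
    obtain ⟨w₄, hw₄, h₁, h₂⟩ := hdirS w hw w₀ hw₀
    have h5 : w₀ - w₄ ≤ t := ht.1 ⟨w₄, ⟨hw₄, h₂⟩, rfl⟩
    exact (sub_le_comm.1 h5).trans h₁
  · intro c hc
    have hub : t ≤ w₀ - c := by
      refine ht.2 ?_
      rintro _ ⟨w, hw, rfl⟩
      exact sub_le_sub_left (hc hw.1) _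
    rw [le_sub_comm]
    exact hub

lemma leb_lub
    (hadd : ∀ l (x y : X), m l (x + y) ≤ m l x + m l y)
    (hsmul : ∀ l (c : ℝ) (x : X), m l (c • x) = |c| * m l x)
    (hmono : ∀ l (x y : X), |x| ≤ |y| → m l x ≤ m l y)
    (hLeb : ∀ (α : Type u) [Preorder α] [Nonempty α] [IsDirected α (· ≤ ·)] (x : α → X),
        Antitone x → IsGLB (Set.range x) 0 →
        ∀ l, Tendsto (fun a => m l (x a)) atTop (𝓝 0))
    {S : Set X} (hne : S.Nonempty) (hdirS : DirectedOn (· ≤ ·) S) {s : X} (hs : IsLUB S s) :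
    ∀ l, ∀ ε > (0:ℝ), ∃ w ∈ S, m l (s - w) < ε := by
  intro l ε hε
  haveI : Nonempty ↥S := hne.to_subtype
  haveI : IsDirected ↥S (· ≤ ·) := ⟨fun a b => by
    obtain ⟨c, hc, h1, h2⟩ := hdirS a a.2 b b.2
    exact ⟨⟨c, hc⟩, h1, h2⟩⟩
  have hanti : Antitone (fun w : ↥S => s - (w : X)) :=
    fun a b h => sub_le_sub_left (show (a : X) ≤ (b : X) from h) s
  have hglb : IsGLB (Set.range fun w : ↥S => s - (w : X)) 0 := by
    constructor
    · rintro y ⟨w, rfl⟩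
      exact sub_nonneg.2 (hs.1 w.2)
    · intro c hc
      have h1 : ∀ w ∈ S, w ≤ s - c := by
        intro w hw
        have h2 : c ≤ s - w := hc ⟨⟨w, hw⟩, rfl⟩
        rw [le_sub_comm] at h2
        exact h2
      have h2 : s ≤ s - c := hs.2 h1
      have h3 : c ≤ s - s := le_sub_comm.1 h2
      simpa using h3
  have htend := hLeb ↥S (fun w : ↥S => s - (w : X)) hanti hglb l
  rw [tendsto_zero_iff_ev (fun b => mnonneg m hadd hsmul hmono l _)] at htend
  obtain ⟨N, hN⟩ := htend ε hε
  exact ⟨(N : X), N.2, hN N (le_refl N)⟩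

lemma leb_glb
    (hadd : ∀ l (x y : X), m l (x + y) ≤ m l x + m l y)
    (hsmul : ∀ l (c : ℝ) (x : X), m l (c • x) = |c| * m l x)
    (hmono : ∀ l (x y : X), |x| ≤ |y| → m l x ≤ m l y)
    (hLeb : ∀ (α : Type u) [Preorder α] [Nonempty α] [IsDirected α (· ≤ ·)] (x : α → X),
        Antitone x → IsGLB (Set.range x) 0 →
        ∀ l, Tendsto (fun a => m l (x a)) atTop (𝓝 0))
    {S : Set X} (hne : S.Nonempty) (hdirS : DirectedOn (· ≥ ·) S) {s : X} (hs : IsGLB S s) :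
    ∀ l, ∀ ε > (0:ℝ), ∃ w ∈ S, m l (w - s) < ε := by
  intro l ε hε
  set T : Set X := (fun w : X => -w) '' S with hT
  have hTne : T.Nonempty := hne.image _
  have hTdir : DirectedOn (· ≤ ·) T := by
    rintro _ ⟨w₁, hw₁, rfl⟩ _ ⟨w₂, hw₂, rfl⟩
    obtain ⟨w₃, hw₃, h₁, h₂⟩ := hdirS w₁ hw₁ w₂ hw₂
    exact ⟨-w₃, ⟨w₃, hw₃, rfl⟩, negneg h₁, negneg h₂⟩
  have hTlub : IsLUB T (-s) := by
    constructor
    · rintro _ ⟨w, hw, rfl⟩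
      exact negneg (hs.1 hw)
    · intro c hc
      have h1 : -c ≤ s := by
        refine hs.2 ?_
        intro w hw
        have h4 : -w ≤ c := hc ⟨w, hw, rfl⟩
        have h5 := negneg h4
        rwa [neg_neg] at h5
      have h6 := negneg h1
      rwa [neg_neg] at h6
  obtain ⟨y, ⟨w, hw, rfl⟩, hy⟩ := leb_lub m hadd hsmul hmono hLeb hTne hTdir hTlub l ε hε
  refine ⟨w, hw, ?_⟩
  rw [show ((fun w : X => -w) w) = -w from rfl] at hy
  rwa [show -s - -w = w - s by abel] at hy

end Wrap

section Main
variable [CovariantClass X X (· + ·) (· ≤ ·)] [Module ℝ X]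
variable {Λ : Type*} (m : Λ → X → ℝ)

lemma interval_complete
    (hadd : ∀ l (x y : X), m l (x + y) ≤ m l x + m l y)
    (hsmul : ∀ l (c : ℝ) (x : X), m l (c • x) = |c| * m l x)
    (hmono : ∀ l (x y : X), |x| ≤ |y| → m l x ≤ m l y)
    (hdir : ∀ l₁ l₂, ∃ l₃, ∀ x : X, m l₁ x ≤ m l₃ x ∧ m l₂ x ≤ m l₃ x)
    (hLeb : ∀ (α : Type u) [Preorder α] [Nonempty α] [IsDirected α (· ≤ ·)] (x : α → X),
        Antitone x → IsGLB (Set.range x) 0 →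
        ∀ l, Tendsto (fun a => m l (x a)) atTop (𝓝 0))
    (hLevi : ∀ (α : Type u) [Preorder α] [Nonempty α] [IsDirected α (· ≤ ·)] (x : α → X),
        Monotone x → (∀ a, 0 ≤ x a) → (∀ l, ∃ M : ℝ, ∀ a, m l (x a) ≤ M) →
        ∃ s : X, IsLUB (Set.range x) s)
    (l₀ : Λ)
    {β : Type u} [Preorder β] [Nonempty β] [IsDirected β (· ≤ ·)]
    (z : β → X) (u : X) (hu : 0 ≤ u) (hz0 : ∀ b, 0 ≤ z b) (hzu : ∀ b, z b ≤ u)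
    (hC : ∀ l, ∀ ε > (0:ℝ), ∃ N, ∀ b ≥ N, ∀ c ≥ N, m l (z b - z c) < ε) :
    ∃ w, 0 ≤ w ∧ w ≤ u ∧ ∀ l, ∀ ε > (0:ℝ), ∃ N, ∀ b ≥ N, m l (z b - w) < ε := by
  have mm0 : ∀ (l : Λ) {a b : X}, 0 ≤ a → a ≤ b → m l a ≤ m l b :=
    fun l {a b} ha h => mmono0 m hmono l ha h
  set L : Λ → Set X :=
    fun l => {w | 0 ≤ w ∧ w ≤ u ∧ ∀ ε > (0:ℝ), ∃ N, ∀ b ≥ N, m l ((w - z b) ⊔ 0) < ε}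
    with hLdef
  have hL0 : ∀ l, (0:X) ∈ L l := by
    intro l
    refine ⟨le_refl 0, hu, fun ε hε => ⟨Classical.arbitrary β, fun b _ => ?_⟩⟩
    have h1 : (0:X) - z b ≤ 0 := by
      rw [zero_sub]
      have := negneg (hz0 b)
      rwa [neg_zero] at this
    rw [pp_eq_zero h1, mzero m hsmul]
    exact hε
  have hLdir : ∀ l, DirectedOn (· ≤ ·) (L l) := by
    intro l w₁ hw₁ w₂ hw₂
    refine ⟨w₁ ⊔ w₂, ⟨hw₁.1.trans le_sup_left, sup_le hw₁.2.1 hw₂.2.1, fun ε hε => ?_⟩,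
      le_sup_left, le_sup_right⟩
    obtain ⟨N, hN⟩ := ev_and (hw₁.2.2 (ε/2) (by linarith)) (hw₂.2.2 (ε/2) (by linarith))
    refine ⟨N, fun b hb => ?_⟩
    have key : (w₁ ⊔ w₂ - z b) ⊔ 0 ≤ (w₁ - z b) ⊔ 0 + ((w₂ - z b) ⊔ 0) := by
      rw [sup_sub]
      refine pp_le (sup_le ?_ ?_) (add_nonneg (pp_nonneg _) (pp_nonneg _))
      · exact (le_pp _).trans (le_add_of_nonneg_right (pp_nonneg _))
      · exact (le_pp _).trans (le_add_of_nonneg_left (pp_nonneg _))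
    calc m l ((w₁ ⊔ w₂ - z b) ⊔ 0) ≤ m l ((w₁ - z b) ⊔ 0 + ((w₂ - z b) ⊔ 0)) :=
          mm0 l (pp_nonneg _) key
    _ ≤ m l ((w₁ - z b) ⊔ 0) + m l ((w₂ - z b) ⊔ 0) := hadd l _ _
    _ < ε/2 + ε/2 := add_lt_add (hN b hb).1 (hN b hb).2
    _ = ε := by ring
  have hsE : ∀ l, ∃ sl, IsLUB (L l) sl := by
    intro l
    refine levi_lub m hLevi ⟨0, hL0 l⟩ (hLdir l) (fun w hw => hw.1) (fun l' => ⟨m l' u, ?_⟩)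
    exact fun w hw => mm0 l' hw.1 hw.2.1
  choose s hs using hsE
  have hs0 : ∀ l, 0 ≤ s l := fun l => (hs l).1 (hL0 l)
  have hsu : ∀ l, s l ≤ u := fun l => (hs l).2 (fun w hw => hw.2.1)
  -- (★1)
  have hstar1 : ∀ l, ∀ ε > (0:ℝ), ∃ N, ∀ b ≥ N, m l ((s l - z b) ⊔ 0) < ε := by
    intro l ε hε
    obtain ⟨w, hwL, hw⟩ :=
      leb_lub m hadd hsmul hmono hLeb ⟨0, hL0 l⟩ (hLdir l) (hs l) l (ε/2) (by linarith)
    obtain ⟨N, hN⟩ := hwL.2.2 (ε/2) (by linarith)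
    refine ⟨N, fun b hb => ?_⟩
    have key : (s l - z b) ⊔ 0 ≤ (s l - w) + ((w - z b) ⊔ 0) := by
      refine pp_le ?_ (add_nonneg (sub_nonneg.2 ((hs l).1 hwL)) (pp_nonneg _))
      calc s l - z b = (s l - w) + (w - z b) := by abel
      _ ≤ (s l - w) + ((w - z b) ⊔ 0) := add_le_add_right (le_pp _) _
    calc m l ((s l - z b) ⊔ 0) ≤ m l ((s l - w) + ((w - z b) ⊔ 0)) := mm0 l (pp_nonneg _) key
    _ ≤ m l (s l - w) + m l ((w - z b) ⊔ 0) := hadd l _ _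
    _ < ε/2 + ε/2 := add_lt_add hw (hN b hb)
    _ = ε := by ring
  -- (★3)
  have hstar3 : ∀ l, ∀ ε > (0:ℝ), ∃ N, ∀ b ≥ N, m l ((z b - s l) ⊔ 0) < ε := by
    intro l
    have hCn : ∀ n : ℕ, ∃ N : β, ∀ b ≥ N, ∀ c ≥ N, m l (z b - z c) < (1/2:ℝ)^n :=
      fun n => hC l ((1/2)^n) (by positivity)
    choose Nn hNn using hCn
    set bb : ℕ → β :=
      fun n => Nat.rec (Nn 0)
        (fun k bk => Classical.choose (directed_of (· ≤ ·) bk (Nn (k+1)))) n with hbb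
    have hbsucc : ∀ n, bb n ≤ bb (n+1) ∧ Nn (n+1) ≤ bb (n+1) := fun n =>
      Classical.choose_spec (directed_of (· ≤ ·) (bb n) (Nn (n+1)))
    have hbN : ∀ n, Nn n ≤ bb n := by
      intro n
      cases n with
      | zero => exact le_refl _
      | succ k => exact (hbsucc k).2
    have hbmono : Monotone bb := monotone_nat_of_le_succ (fun n => (hbsucc n).1)
    have hosc : ∀ n, ∀ b ≥ bb n, ∀ c ≥ bb n, m l (z b - z c) < (1/2:ℝ)^n :=
      fun n b hb c hc => hNn n b ((hbN n).trans hb) c ((hbN n).trans hc)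
    -- the decreasing finite infima
    set V : ℕ → ℕ → X :=
      fun n => Nat.rec (z (bb n)) (fun N vN => vN ⊓ z (bb (n + N + 1))) with hV
    have hVsucc : ∀ n N, V n (N+1) = V n N ⊓ z (bb (n + N + 1)) := fun n N => rfl
    have hV0 : ∀ n, V n 0 = z (bb n) := fun n => rfl
    have hVle : ∀ n N, V n N ≤ z (bb n) := by
      intro n N
      induction N with
      | zero => exact le_refl _
      | succ k ih => rw [hVsucc]; exact inf_le_left.trans ih
    have hVpos : ∀ n N, 0 ≤ V n N := by
      intro n N
      induction N with
      | zero => exact hz0 _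
      | succ k ih => rw [hVsucc]; exact le_inf ih (hz0 _)
    have hVanti : ∀ n, Antitone (V n) := fun n =>
      antitone_nat_of_succ_le (fun N => by rw [hVsucc]; exact inf_le_left)
    have hVdir : ∀ n, DirectedOn (· ≥ ·) (Set.range (V n)) := by
      rintro n _ ⟨N₁, rfl⟩ _ ⟨N₂, rfl⟩
      exact ⟨V n (max N₁ N₂), ⟨_, rfl⟩, hVanti n (le_max_left _ _), hVanti n (le_max_right _ _)⟩
    -- telescoping bounds
    set R : ℕ → ℕ → X :=
      fun n N => ∑ i ∈ Finset.range N, |z (bb (n + i + 1)) - z (bb (n + i))| with hR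
    have hRsucc : ∀ n N, R n (N+1) = R n N + |z (bb (n + N + 1)) - z (bb (n + N))| :=
      fun n N => Finset.sum_range_succ _ N
    have hRmono : ∀ n N, R n N ≤ R n (N+1) := fun n N => by
      rw [hRsucc]; exact le_add_of_nonneg_right (abs_nonneg _)
    have htel : ∀ n k, z (bb n) - z (bb (n + k)) ≤ R n k := by
      intro n k
      induction k with
      | zero => simp [hR]
      | succ j ih =>
        rw [hRsucc]
        calc z (bb n) - z (bb (n + (j+1)))
            = (z (bb n) - z (bb (n + j))) + (z (bb (n + j)) - z (bb (n + j + 1))) := by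
              rw [show n + (j+1) = n + j + 1 from rfl]; abel
        _ ≤ R n j + |z (bb (n + j + 1)) - z (bb (n + j))| := by
              refine add_le_add ih ?_
              rw [abs_sub_comm]
              exact le_abs_self _
    have hZV : ∀ n N, z (bb n) - V n N ≤ R n N := by
      intro n N
      induction N with
      | zero => simp [hR, hV0]
      | succ k ih =>
        rw [hVsucc, sub_inf]
        exact sup_le (ih.trans (hRmono n k)) (htel n (k+1))
    have hmR : ∀ n N, m l (R n N) ≤ ∑ i ∈ Finset.range N, (1/2:ℝ)^(n+i) := by
      intro n N
      induction N with
      | zero => simp [hR, mzero m hsmul]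
      | succ k ih =>
        rw [hRsucc, Finset.sum_range_succ]
        refine (hadd l _ _).trans (add_le_add ih ?_)
        rw [mabs m hmono]
        exact (hosc (n+k) (bb (n+k+1)) (hbmono (Nat.le_succ _)) (bb (n+k)) (le_refl _)).le
    have hsumle : ∀ n N, (∑ i ∈ Finset.range N, (1/2:ℝ)^(n+i)) ≤ 2 * (1/2:ℝ)^n := by
      intro n N
      have h1 : (∑ i ∈ Finset.range N, (1/2:ℝ)^(n+i))
          = (1/2:ℝ)^n * ∑ i ∈ Finset.range N, (1/2:ℝ)^i := by
        rw [Finset.mul_sum]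
        exact Finset.sum_congr rfl (fun i _ => by rw [pow_add])
      rw [h1, mul_comm]
      exact mul_le_mul_of_nonneg_right (sum_geometric_two_le N) (by positivity)
    have hmzV : ∀ n N, m l (z (bb n) - V n N) ≤ 2 * (1/2:ℝ)^n := fun n N =>
      (mm0 l (sub_nonneg.2 (hVle n N)) (hZV n N)).trans ((hmR n N).trans (hsumle n N))
    -- Qn := inf_N V n N
    have hQnE : ∀ n, ∃ q, IsGLB (Set.range (V n)) q := by
      intro n
      refine levi_glb m hadd hmono hLevi (S := Set.range (V n)) ⟨V n 0, ⟨0, rfl⟩⟩ (hVdir n) (fun l' => ⟨m l' u, ?_⟩)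
      rintro _ ⟨N, rfl⟩
      exact mm0 l' (hVpos n N) ((hVle n N).trans (hzu _))
    choose Qn hQn using hQnE
    have hQnle : ∀ n N, Qn n ≤ V n N := fun n N => (hQn n).1 ⟨N, rfl⟩
    have hQn0 : ∀ n, 0 ≤ Qn n := fun n => (hQn n).2 (by rintro _ ⟨N, rfl⟩; exact hVpos n N)
    have hQnu : ∀ n, Qn n ≤ u := fun n => (hQnle n 0).trans ((hVle n 0).trans (hzu _))
    have hVshift : ∀ n N, V n (N+1) = z (bb n) ⊓ V (n+1) N := by
      intro n N
      induction N with
      | zero => rfl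
      | succ k ih =>
        rw [hVsucc n (k+1), ih, hVsucc (n+1) k, inf_assoc,
          show n + (k+1) + 1 = (n+1) + k + 1 by omega]
    have hQnmono : Monotone Qn := by
      refine monotone_nat_of_le_succ (fun n => ?_)
      refine (hQn (n+1)).2 ?_
      rintro _ ⟨N, rfl⟩
      refine (hQnle n (N+1)).trans ?_
      rw [hVshift n N]
      exact inf_le_right
    have hQndir : DirectedOn (· ≤ ·) (Set.range Qn) := by
      rintro _ ⟨n₁, rfl⟩ _ ⟨n₂, rfl⟩
      exact ⟨Qn (max n₁ n₂), ⟨_, rfl⟩, hQnmono (le_max_left _ _), hQnmono (le_max_right _ _)⟩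
    obtain ⟨Q, hQ⟩ : ∃ Q, IsLUB (Set.range Qn) Q := by
      refine levi_lub m hLevi (S := Set.range Qn) ⟨Qn 0, ⟨0, rfl⟩⟩ hQndir (by rintro _ ⟨n, rfl⟩; exact hQn0 n)
        (fun l' => ⟨m l' u, by rintro _ ⟨n, rfl⟩; exact mm0 l' (hQn0 n) (hQnu n)⟩)
    have hQle : ∀ n, Qn n ≤ Q := fun n => hQ.1 ⟨n, rfl⟩
    have hmzQn : ∀ n, m l (z (bb n) - Qn n) ≤ 2 * (1/2:ℝ)^n := by
      intro n
      refine real_le_of_forall_pos (fun δ hδ => ?_)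
      obtain ⟨_, ⟨N, rfl⟩, hN⟩ :=
        leb_glb m hadd hsmul hmono hLeb (S := Set.range (V n)) ⟨V n 0, ⟨0, rfl⟩⟩ (hVdir n) (hQn n) l δ hδ
      calc m l (z (bb n) - Qn n) ≤ m l (z (bb n) - V n N) + m l (V n N - Qn n) := by
            have h := hadd l (z (bb n) - V n N) (V n N - Qn n)
            rwa [sub_add_sub_cancel] at h
      _ ≤ 2 * (1/2:ℝ)^n + δ := add_le_add (hmzV n N) hN.le
    have hQQn : ∀ ε > (0:ℝ), ∃ n₀, ∀ n ≥ n₀, m l (Q - Qn n) < ε := by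
      intro ε hε
      obtain ⟨_, ⟨n₀, rfl⟩, hn₀⟩ :=
        leb_lub m hadd hsmul hmono hLeb (S := Set.range Qn) ⟨Qn 0, ⟨0, rfl⟩⟩ hQndir hQ l ε hε
      refine ⟨n₀, fun n hn => lt_of_le_of_lt ?_ hn₀⟩
      exact mm0 l (sub_nonneg.2 (hQle n)) (sub_le_sub_left (hQnmono hn) Q)
    -- convergence of (Q - z b)⁺ to 0 : membership of Q in L l
    have hconv2 : ∀ ε > (0:ℝ), ∃ N, ∀ b ≥ N, m l ((Q - z b) ⊔ 0) < ε := by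
      intro ε hε
      obtain ⟨n₀, hn₀⟩ := hQQn (ε/2) (by linarith)
      obtain ⟨n₁, hn₁⟩ : ∃ n₁ : ℕ, (1/2:ℝ)^n₁ < ε/2 :=
        exists_pow_lt_of_lt_one (by linarith) (by norm_num)
      set n := max n₀ n₁ with hn
      refine ⟨bb n, fun b hb => ?_⟩
      have key : (Q - z b) ⊔ 0 ≤ (Q - Qn n) + ((z (bb n) - z b) ⊔ 0) := by
        refine pp_le ?_ (add_nonneg (sub_nonneg.2 (hQle n)) (pp_nonneg _))
        calc Q - z b = (Q - Qn n) + (Qn n - z b) := by abel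
        _ ≤ (Q - Qn n) + ((z (bb n) - z b) ⊔ 0) := by
              refine add_le_add_right ?_ _
              refine (sub_le_sub_right ?_ _).trans (le_pp _)
              exact hQnle n 0
      calc m l ((Q - z b) ⊔ 0) ≤ m l ((Q - Qn n) + ((z (bb n) - z b) ⊔ 0)) :=
            mm0 l (pp_nonneg _) key
      _ ≤ m l (Q - Qn n) + m l ((z (bb n) - z b) ⊔ 0) := hadd l _ _
      _ < ε/2 + ε/2 := by
            refine add_lt_add (hn₀ n (le_max_left _ _)) ?_
            have h2 : m l ((z (bb n) - z b) ⊔ 0) ≤ m l (z (bb n) - z b) :=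
              (mm0 l (pp_nonneg _) (pp_le_abs _)).trans_eq (mabs m hmono l _)
            refine h2.trans_lt (lt_of_lt_of_le (hosc n (bb n) (le_refl _) b hb) ?_)
            exact (pow_le_pow_of_le_one (by norm_num) (by norm_num)
              (le_max_right n₀ n₁)).trans hn₁.le
      _ = ε := by ring
    have hQmem : Q ∈ L l :=
      ⟨(hQn0 0).trans (hQle 0), hQ.2 (by rintro _ ⟨n, rfl⟩; exact hQnu n), hconv2⟩
    have hQs : Q ≤ s l := (hs l).1 hQmem
    -- now conclude star3
    intro ε hε
    obtain ⟨n₁, hn₁⟩ : ∃ n₁ : ℕ, (1/2:ℝ)^n₁ < ε/4 :=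
      exists_pow_lt_of_lt_one (by linarith) (by norm_num)
    refine ⟨bb n₁, fun b hb => ?_⟩
    have key : (z b - s l) ⊔ 0 ≤ |z b - z (bb n₁)| + (z (bb n₁) - Qn n₁) := by
      refine pp_le ?_ (add_nonneg (abs_nonneg _) (sub_nonneg.2 (hQnle n₁ 0)))
      calc z b - s l ≤ z b - Q := sub_le_sub_left hQs _
      _ ≤ z b - Qn n₁ := sub_le_sub_left (hQle n₁) _
      _ = (z b - z (bb n₁)) + (z (bb n₁) - Qn n₁) := by abel
      _ ≤ |z b - z (bb n₁)| + (z (bb n₁) - Qn n₁) := add_le_add_left (le_abs_self _) _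
    calc m l ((z b - s l) ⊔ 0) ≤ m l (|z b - z (bb n₁)| + (z (bb n₁) - Qn n₁)) :=
          mm0 l (pp_nonneg _) key
    _ ≤ m l |z b - z (bb n₁)| + m l (z (bb n₁) - Qn n₁) := hadd l _ _
    _ < (1/2:ℝ)^n₁ + 2 * (1/2:ℝ)^n₁ := by
          refine add_lt_add_of_lt_of_le ?_ (hmzQn n₁)
          rw [mabs m hmono]
          exact hosc n₁ b hb (bb n₁) (le_refl _)
    _ = 3 * (1/2:ℝ)^n₁ := by ring
    _ < ε := by linarith
  -- glb over Λ of the s l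
  have hsmono : ∀ l₁ l₂, (∀ v, m l₁ v ≤ m l₂ v) → s l₂ ≤ s l₁ := by
    intro l₁ l₂ hdom
    refine (hs l₂).2 (fun w hw => (hs l₁).1 ?_)
    exact ⟨hw.1, hw.2.1, fun ε hε =>
      (hw.2.2 ε hε).imp (fun N hN b hb => lt_of_le_of_lt (hdom _) (hN b hb))⟩
  set SS : Set X := Set.range s with hSS
  have hSSne : SS.Nonempty := ⟨s l₀, ⟨l₀, rfl⟩⟩
  have hSSdir : DirectedOn (· ≥ ·) SS := by
    rintro _ ⟨l₁, rfl⟩ _ ⟨l₂, rfl⟩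
    obtain ⟨l₃, hl₃⟩ := hdir l₁ l₂
    exact ⟨s l₃, ⟨l₃, rfl⟩, hsmono l₁ l₃ (fun v => (hl₃ v).1), hsmono l₂ l₃ (fun v => (hl₃ v).2)⟩
  have hSSbdd : ∀ l', ∃ M : ℝ, ∀ w ∈ SS, m l' w ≤ M := fun l' =>
    ⟨m l' u, by rintro _ ⟨l₁, rfl⟩; exact mm0 l' (hs0 l₁) (hsu l₁)⟩
  obtain ⟨w, hw⟩ : ∃ w, IsGLB SS w := levi_glb m hadd hmono hLevi hSSne hSSdir hSSbdd
  have hw0 : 0 ≤ w := hw.2 (by rintro _ ⟨l₁, rfl⟩; exact hs0 l₁)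
  have hwu : w ≤ u := (hw.1 ⟨l₀, rfl⟩).trans (hsu l₀)
  refine ⟨w, hw0, hwu, ?_⟩
  intro l ε hε
  obtain ⟨_, ⟨l₁, rfl⟩, hl₁⟩ :=
    leb_glb m hadd hsmul hmono hLeb hSSne hSSdir hw l (ε/3) (by linarith)
  obtain ⟨l₂, hl₂⟩ := hdir l₁ l
  have hdom1 : ∀ v, m l₁ v ≤ m l₂ v := fun v => (hl₂ v).1
  have hdoml : ∀ v, m l v ≤ m l₂ v := fun v => (hl₂ v).2
  have hs21 : s l₂ ≤ s l₁ := hsmono l₁ l₂ hdom1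
  have hws2 : w ≤ s l₂ := hw.1 ⟨l₂, rfl⟩
  have hgap : m l (s l₂ - w) < ε/3 :=
    lt_of_le_of_lt (mm0 l (sub_nonneg.2 hws2) (sub_le_sub_right hs21 w)) hl₁
  obtain ⟨N, hN⟩ := ev_and (hstar3 l₂ (ε/3) (by linarith)) (hstar1 l₂ (ε/3) (by linarith))
  refine ⟨N, fun b hb => ?_⟩
  obtain ⟨h3, h1⟩ := hN b hb
  have habs : m l (z b - w) ≤ m l ((z b - w) ⊔ 0) + m l ((-(z b - w)) ⊔ 0) := by
    calc m l (z b - w) = m l |z b - w| := (mabs m hmono l _).symm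
    _ = m l ((z b - w) ⊔ 0 + ((-(z b - w)) ⊔ 0)) := by rw [← abs_eq_pp_add_pn]
    _ ≤ _ := hadd l _ _
  have hb1 : m l ((z b - w) ⊔ 0) < 2*ε/3 := by
    have key : (z b - w) ⊔ 0 ≤ (z b - s l₂) ⊔ 0 + (s l₂ - w) := by
      refine pp_le ?_ (add_nonneg (pp_nonneg _) (sub_nonneg.2 hws2))
      calc z b - w = (z b - s l₂) + (s l₂ - w) := by abel
      _ ≤ (z b - s l₂) ⊔ 0 + (s l₂ - w) := add_le_add_left (le_pp _) _
    calc m l ((z b - w) ⊔ 0) ≤ m l ((z b - s l₂) ⊔ 0 + (s l₂ - w)) := mm0 l (pp_nonneg _) key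
    _ ≤ m l ((z b - s l₂) ⊔ 0) + m l (s l₂ - w) := hadd l _ _
    _ ≤ m l₂ ((z b - s l₂) ⊔ 0) + m l (s l₂ - w) := add_le_add_left (hdoml _) _
    _ < ε/3 + ε/3 := add_lt_add h3 hgap
    _ = 2*ε/3 := by ring
  have hb2 : m l ((-(z b - w)) ⊔ 0) < ε/3 := by
    have key : (-(z b - w)) ⊔ 0 ≤ (s l₂ - z b) ⊔ 0 := by
      refine pp_mono ?_
      rw [neg_sub]
      exact sub_le_sub_right hws2 _
    calc m l ((-(z b - w)) ⊔ 0) ≤ m l ((s l₂ - z b) ⊔ 0) := mm0 l (pp_nonneg _) key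
    _ ≤ m l₂ ((s l₂ - z b) ⊔ 0) := hdoml _
    _ < ε/3 := h1
  linarith

lemma pos_limit
    (hadd : ∀ l (x y : X), m l (x + y) ≤ m l x + m l y)
    (hsmul : ∀ l (c : ℝ) (x : X), m l (c • x) = |c| * m l x)
    (hmono : ∀ l (x y : X), |x| ≤ |y| → m l x ≤ m l y)
    (hsep : ∀ x : X, (∀ l, m l x = 0) → x = 0)
    (hdir : ∀ l₁ l₂, ∃ l₃, ∀ x : X, m l₁ x ≤ m l₃ x ∧ m l₂ x ≤ m l₃ x)
    (hLeb : ∀ (α : Type u) [Preorder α] [Nonempty α] [IsDirected α (· ≤ ·)] (x : α → X),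
        Antitone x → IsGLB (Set.range x) 0 →
        ∀ l, Tendsto (fun a => m l (x a)) atTop (𝓝 0))
    (hLevi : ∀ (α : Type u) [Preorder α] [Nonempty α] [IsDirected α (· ≤ ·)] (x : α → X),
        Monotone x → (∀ a, 0 ≤ x a) → (∀ l, ∃ M : ℝ, ∀ a, m l (x a) ≤ M) →
        ∃ s : X, IsLUB (Set.range x) s)
    (l₀ : Λ)
    {β : Type u} [Preorder β] [Nonempty β] [IsDirected β (· ≤ ·)]
    (y : β → X) (hy0 : ∀ b, 0 ≤ y b) (hybdd : ∀ l, ∃ M : ℝ, ∀ b, m l (y b) ≤ M)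
    (hC : ∀ u : X, 0 ≤ u → ∀ l, ∀ ε > (0:ℝ), ∃ N, ∀ b ≥ N, ∀ c ≥ N, m l (|y b - y c| ⊓ u) < ε) :
    ∃ x₀, ∀ u : X, 0 ≤ u → ∀ l, ∀ ε > (0:ℝ), ∃ N, ∀ b ≥ N, m l (|y b - x₀| ⊓ u) < ε := by
  have mm0 : ∀ (l : Λ) {a b : X}, 0 ≤ a → a ≤ b → m l a ≤ m l b :=
    fun l {a b} ha h => mmono0 m hmono l ha h
  have msym : ∀ (l : Λ) (a b : X), m l (a - b) = m l (b - a) := by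
    intro l a b
    rw [← neg_sub b a, mneg m hmono]
  have hE' : ∀ p : {u : X // 0 ≤ u}, ∃ w, 0 ≤ w ∧ w ≤ p.val ∧
      ∀ l, ∀ ε > (0:ℝ), ∃ N, ∀ b ≥ N, m l (y b ⊓ p.val - w) < ε := by
    rintro ⟨u, hu⟩
    refine interval_complete m hadd hsmul hmono hdir hLeb hLevi l₀ (fun b => y b ⊓ u) u hu
      (fun b => le_inf (hy0 b) hu) (fun b => inf_le_right) ?_
    intro l ε hε
    obtain ⟨N, hN⟩ := hC u hu l ε hε
    refine ⟨N, fun b hb c hc => lt_of_le_of_lt (hmono l _ _ ?_) (hN b hb c hc)⟩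
    rw [abs_of_nonneg (le_inf (abs_nonneg _) hu)]
    exact abs_inf_sub_inf_le' (hy0 b) (hy0 c) hu
  choose Y hY0 hYle hYconv using hE'
  have hYmono : ∀ p q : {u : X // 0 ≤ u}, p ≤ q → Y p ≤ Y q := by
    intro p q hpq
    have hz : ∀ l, m l ((Y p - Y q) ⊔ 0) = 0 := by
      intro l
      refine real_eq_zero_of_forall_lt (mnonneg m hadd hsmul hmono l _) (fun ε hε => ?_)
      obtain ⟨N, hN⟩ := ev_and (hYconv p l (ε/2) (by linarith)) (hYconv q l (ε/2) (by linarith))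
      obtain ⟨hb1, hb2⟩ := hN N (le_refl N)
      have key : (Y p - Y q) ⊔ 0 ≤ |y N ⊓ p.val - Y p| + |y N ⊓ q.val - Y q| := by
        refine pp_le ?_ (add_nonneg (abs_nonneg _) (abs_nonneg _))
        calc Y p - Y q
            = (Y p - y N ⊓ p.val) + (y N ⊓ p.val - y N ⊓ q.val) + (y N ⊓ q.val - Y q) := by abel
        _ ≤ |y N ⊓ p.val - Y p| + 0 + |y N ⊓ q.val - Y q| := by
              refine add_le_add (add_le_add ?_ ?_) (le_abs_self _)
              · rw [abs_sub_comm]; exact le_abs_self _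
              · exact sub_nonpos.2 (inf_le_inf_left _ hpq)
        _ = |y N ⊓ p.val - Y p| + |y N ⊓ q.val - Y q| := by rw [add_zero]
      calc m l ((Y p - Y q) ⊔ 0)
          ≤ m l (|y N ⊓ p.val - Y p| + |y N ⊓ q.val - Y q|) := mm0 l (pp_nonneg _) key
      _ ≤ m l |y N ⊓ p.val - Y p| + m l |y N ⊓ q.val - Y q| := hadd l _ _
      _ = m l (y N ⊓ p.val - Y p) + m l (y N ⊓ q.val - Y q) := by
            rw [mabs m hmono, mabs m hmono]
      _ < ε/2 + ε/2 := add_lt_add hb1 hb2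
      _ = ε := by ring
    have h1 : (Y p - Y q) ⊔ 0 = 0 := hsep _ hz
    have h2 : Y p - Y q ≤ 0 := by
      rw [← h1]
      exact le_pp _
    exact sub_nonpos.1 h2
  have hYbdd : ∀ l, ∃ M : ℝ, ∀ p, m l (Y p) ≤ M := by
    intro l
    obtain ⟨M, hM⟩ := hybdd l
    refine ⟨M, fun p => real_le_of_forall_pos (fun δ hδ => ?_)⟩
    obtain ⟨N, hN⟩ := hYconv p l δ hδ
    have h1 := hN N (le_refl N)
    have h2 : m l (Y p) ≤ m l (y N ⊓ p.val) + m l (Y p - y N ⊓ p.val) := by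
      have h := hadd l (y N ⊓ p.val) (Y p - y N ⊓ p.val)
      rwa [add_sub_cancel] at h
    have h3 : m l (y N ⊓ p.val) ≤ M :=
      (mm0 l (le_inf (hy0 N) p.2) inf_le_left).trans (hM N)
    rw [msym l] at h1
    linarith
  haveI hPne : Nonempty {u : X // 0 ≤ u} := ⟨⟨0, le_refl 0⟩⟩
  haveI hPdir : IsDirected {u : X // 0 ≤ u} (· ≤ ·) :=
    ⟨fun p q => ⟨⟨p.val ⊔ q.val, p.2.trans le_sup_left⟩, le_sup_left, le_sup_right⟩⟩
  obtain ⟨x₀, hx₀⟩ :=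
    hLevi {u : X // 0 ≤ u} Y (fun p q h => hYmono p q h) (fun p => hY0 p) hYbdd
  have hx₀ge : ∀ p, Y p ≤ x₀ := fun p => hx₀.1 ⟨p, rfl⟩
  have happrox : ∀ l, ∀ ε > (0:ℝ), ∃ p, m l (x₀ - Y p) < ε := by
    intro l ε hε
    have hdirY : DirectedOn (· ≤ ·) (Set.range Y) := by
      rintro _ ⟨p, rfl⟩ _ ⟨q, rfl⟩
      exact ⟨Y ⟨p.val ⊔ q.val, p.2.trans le_sup_left⟩, ⟨_, rfl⟩,
        hYmono _ _ le_sup_left, hYmono _ _ le_sup_right⟩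
    obtain ⟨_, ⟨p, rfl⟩, hp⟩ := leb_lub m hadd hsmul hmono hLeb (S := Set.range Y)
      ⟨Y ⟨0, le_refl 0⟩, ⟨_, rfl⟩⟩ hdirY hx₀ l ε hε
    exact ⟨p, hp⟩
  refine ⟨x₀, ?_⟩
  intro u hu l ε hε
  obtain ⟨p₀, hp₀⟩ := happrox l (ε/6) (by linarith)
  have hw0 : 0 ≤ p₀.val := p₀.2
  set w : X := p₀.val with hwdef
  set pwu : {u : X // 0 ≤ u} := ⟨w + u, add_nonneg hw0 hu⟩ with hpwudef
  have hple : p₀ ≤ pwu := le_add_of_nonneg_right hu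
  have hmid : m l (Y pwu - Y p₀) < ε/6 :=
    lt_of_le_of_lt
      (mm0 l (sub_nonneg.2 (hYmono p₀ pwu hple)) (sub_le_sub_right (hx₀ge pwu) _)) hp₀
  obtain ⟨N, hN⟩ := ev_and (hYconv p₀ l (ε/6) (by linarith)) (hYconv pwu l (ε/6) (by linarith))
  refine ⟨N, fun b hb => ?_⟩
  obtain ⟨hb1, hb2⟩ := hN b hb
  -- hb1 : m l (y b ⊓ w - Y p₀) < ε/6 ; hb2 : m l (y b ⊓ (w + u) - Y pwu) < ε/6
  have hBpos : (0:X) ≤ y b - y b ⊓ w := sub_nonneg.2 inf_le_left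
  have hCpos : (0:X) ≤ x₀ - x₀ ⊓ w := sub_nonneg.2 inf_le_left
  have hdecomp : |y b - x₀| ⊓ u ≤
      |y b ⊓ w - x₀ ⊓ w| + ((y b - w) ⊔ 0) ⊓ u + (x₀ - x₀ ⊓ w) := by
    have h1 : |y b - x₀| ≤ |y b ⊓ w - x₀ ⊓ w| + (y b - y b ⊓ w) + (x₀ - x₀ ⊓ w) := by
      have he : y b - x₀ = ((y b ⊓ w - x₀ ⊓ w) + (y b - y b ⊓ w)) + -(x₀ - x₀ ⊓ w) := by abel
      calc |y b - x₀|
          = |((y b ⊓ w - x₀ ⊓ w) + (y b - y b ⊓ w)) + -(x₀ - x₀ ⊓ w)| := by rw [← he]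
      _ ≤ |(y b ⊓ w - x₀ ⊓ w) + (y b - y b ⊓ w)| + |-(x₀ - x₀ ⊓ w)| := pabs_add _ _
      _ ≤ (|y b ⊓ w - x₀ ⊓ w| + |y b - y b ⊓ w|) + |x₀ - x₀ ⊓ w| := by
            rw [abs_neg]
            exact add_le_add_left (pabs_add _ _) _
      _ = |y b ⊓ w - x₀ ⊓ w| + (y b - y b ⊓ w) + (x₀ - x₀ ⊓ w) := by
            rw [abs_of_nonneg hBpos, abs_of_nonneg hCpos]
    have h2 : |y b - x₀| ⊓ u ≤
        (|y b ⊓ w - x₀ ⊓ w| + (y b - y b ⊓ w) + (x₀ - x₀ ⊓ w)) ⊓ u :=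
      inf_le_inf_right u h1
    have h3 : (|y b ⊓ w - x₀ ⊓ w| + (y b - y b ⊓ w) + (x₀ - x₀ ⊓ w)) ⊓ u ≤
        (|y b ⊓ w - x₀ ⊓ w| + (y b - y b ⊓ w)) ⊓ u + (x₀ - x₀ ⊓ w) ⊓ u :=
      trunc_subadd (add_nonneg (abs_nonneg _) hBpos) hCpos hu
    have h4 : (|y b ⊓ w - x₀ ⊓ w| + (y b - y b ⊓ w)) ⊓ u ≤
        |y b ⊓ w - x₀ ⊓ w| ⊓ u + (y b - y b ⊓ w) ⊓ u :=
      trunc_subadd (abs_nonneg _) hBpos hu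
    refine (h2.trans h3).trans ?_
    refine (add_le_add_left h4 _).trans ?_
    rw [sub_inf_self_eq_pp (y b) w]
    exact add_le_add (add_le_add_left inf_le_left _) inf_le_left
  have hmT1 : m l |y b ⊓ w - x₀ ⊓ w| < ε/6 + ε/6 := by
    have hY1 : Y p₀ ≤ x₀ ⊓ w := le_inf (hx₀ge p₀) (hYle p₀)
    have hk : |y b ⊓ w - x₀ ⊓ w| ≤ |y b ⊓ w - Y p₀| + (x₀ ⊓ w - Y p₀) := by
      have he : y b ⊓ w - x₀ ⊓ w = (y b ⊓ w - Y p₀) + -(x₀ ⊓ w - Y p₀) := by abel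
      calc |y b ⊓ w - x₀ ⊓ w| = |(y b ⊓ w - Y p₀) + -(x₀ ⊓ w - Y p₀)| := by rw [← he]
      _ ≤ |y b ⊓ w - Y p₀| + |-(x₀ ⊓ w - Y p₀)| := pabs_add _ _
      _ = |y b ⊓ w - Y p₀| + (x₀ ⊓ w - Y p₀) := by
            rw [abs_neg, abs_of_nonneg (sub_nonneg.2 hY1)]
    calc m l |y b ⊓ w - x₀ ⊓ w| ≤ m l (|y b ⊓ w - Y p₀| + (x₀ ⊓ w - Y p₀)) :=
          mm0 l (abs_nonneg _) hk
    _ ≤ m l |y b ⊓ w - Y p₀| + m l (x₀ ⊓ w - Y p₀) := hadd l _ _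
    _ < ε/6 + ε/6 := by
          refine add_lt_add ?_ ?_
          · rw [mabs m hmono]; exact hb1
          · exact lt_of_le_of_lt
              (mm0 l (sub_nonneg.2 hY1) (sub_le_sub_right inf_le_left _)) hp₀
  have hmT2 : m l (((y b - w) ⊔ 0) ⊓ u) < ε/6 + ε/6 + ε/6 := by
    have hk1 : ((y b - w) ⊔ 0) ⊓ u ≤ y b ⊓ (w + u) - y b ⊓ w := by
      rw [le_sub_iff_add_le']
      exact trunc_piece hw0 hu
    have hk2 : m l (y b ⊓ (w + u) - y b ⊓ w) ≤
        m l (y b ⊓ (w + u) - Y pwu) + m l (Y pwu - Y p₀) + m l (Y p₀ - y b ⊓ w) := by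
      have h5 := hadd l (y b ⊓ (w + u) - Y pwu) (Y pwu - Y p₀)
      have h6 := hadd l ((y b ⊓ (w + u) - Y pwu) + (Y pwu - Y p₀)) (Y p₀ - y b ⊓ w)
      calc m l (y b ⊓ (w + u) - y b ⊓ w)
          = m l (((y b ⊓ (w + u) - Y pwu) + (Y pwu - Y p₀)) + (Y p₀ - y b ⊓ w)) := by
            congr 1
            abel
      _ ≤ m l ((y b ⊓ (w + u) - Y pwu) + (Y pwu - Y p₀)) + m l (Y p₀ - y b ⊓ w) := h6
      _ ≤ m l (y b ⊓ (w + u) - Y pwu) + m l (Y pwu - Y p₀) + m l (Y p₀ - y b ⊓ w) :=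
            add_le_add_left h5 _
    calc m l (((y b - w) ⊔ 0) ⊓ u) ≤ m l (y b ⊓ (w + u) - y b ⊓ w) :=
          mm0 l (le_inf (pp_nonneg _) hu) hk1
    _ ≤ m l (y b ⊓ (w + u) - Y pwu) + m l (Y pwu - Y p₀) + m l (Y p₀ - y b ⊓ w) := hk2
    _ < ε/6 + ε/6 + ε/6 := by
          refine add_lt_add (add_lt_add hb2 hmid) ?_
          rw [msym l]
          exact hb1
  have hmT3 : m l (x₀ - x₀ ⊓ w) < ε/6 := by
    have hY1 : Y p₀ ≤ x₀ ⊓ w := le_inf (hx₀ge p₀) (hYle p₀)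
    exact lt_of_le_of_lt (mm0 l hCpos (sub_le_sub_left hY1 x₀)) hp₀
  have htotal : m l (|y b - x₀| ⊓ u) ≤
      m l |y b ⊓ w - x₀ ⊓ w| + m l (((y b - w) ⊔ 0) ⊓ u) + m l (x₀ - x₀ ⊓ w) := by
    have h5 := hadd l (|y b ⊓ w - x₀ ⊓ w|) (((y b - w) ⊔ 0) ⊓ u)
    have h6 := hadd l (|y b ⊓ w - x₀ ⊓ w| + ((y b - w) ⊔ 0) ⊓ u) (x₀ - x₀ ⊓ w)
    calc m l (|y b - x₀| ⊓ u)
        ≤ m l (|y b ⊓ w - x₀ ⊓ w| + ((y b - w) ⊔ 0) ⊓ u + (x₀ - x₀ ⊓ w)) :=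
          mm0 l (le_inf (abs_nonneg _) hu) hdecomp
    _ ≤ m l (|y b ⊓ w - x₀ ⊓ w| + ((y b - w) ⊔ 0) ⊓ u) + m l (x₀ - x₀ ⊓ w) := h6
    _ ≤ m l |y b ⊓ w - x₀ ⊓ w| + m l (((y b - w) ⊔ 0) ⊓ u) + m l (x₀ - x₀ ⊓ w) :=
          add_le_add_left h5 _
  linarith

end Main

end S15

/-- An m-bounded um-closed subset `A` of an MNVL with the Lebesgue and Levi
properties is um-complete: every um-Cauchy net in `A` um-converges to an element of `A`. -/
theorem stmt15 {X : Type u} [AddCommGroup X] [Lattice X]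
    [CovariantClass X X (· + ·) (· ≤ ·)] [Module ℝ X]
    {Λ : Type*} (m : Λ → X → ℝ)
    (hadd : ∀ l (x y : X), m l (x + y) ≤ m l x + m l y)
    (hsmul : ∀ l (c : ℝ) (x : X), m l (c • x) = |c| * m l x)
    (hmono : ∀ l (x y : X), |x| ≤ |y| → m l x ≤ m l y)
    (hsep : ∀ x : X, (∀ l, m l x = 0) → x = 0)
    (hdir : ∀ l₁ l₂, ∃ l₃, ∀ x : X, m l₁ x ≤ m l₃ x ∧ m l₂ x ≤ m l₃ x)
    -- Lebesgue property
    (hLeb : ∀ (α : Type u) [Preorder α] [Nonempty α] [IsDirected α (· ≤ ·)] (x : α → X),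
        Antitone x → IsGLB (Set.range x) 0 →
        ∀ l, Tendsto (fun a => m l (x a)) atTop (𝓝 0))
    -- Levi property
    (hLevi : ∀ (α : Type u) [Preorder α] [Nonempty α] [IsDirected α (· ≤ ·)] (x : α → X),
        Monotone x → (∀ a, 0 ≤ x a) → (∀ l, ∃ M : ℝ, ∀ a, m l (x a) ≤ M) →
        ∃ s : X, IsLUB (Set.range x) s)
    (A : Set X)
    (hAbdd : ∀ l, ∃ M : ℝ, ∀ a ∈ A, m l a ≤ M)
    (hAclosed : @IsClosed X (umTop m) A) :
    ∀ (β : Type u) [Preorder β] [Nonempty β] [IsDirected β (· ≤ ·)] (x : β → X),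
      (∀ b, x b ∈ A) →
      (∀ u : X, 0 ≤ u → ∀ l, ∀ ε > (0:ℝ), ∃ N, ∀ b ≥ N, ∀ c ≥ N,
          m l (|x b - x c| ⊓ u) < ε) →
      ∃ x₀ ∈ A, ∀ u : X, 0 ≤ u → ∀ l,
          Tendsto (fun b => m l (|x b - x₀| ⊓ u)) atTop (𝓝 0) := by
  intro β _ _ _ x hxA hxC
  classical
  by_cases hΛ : Nonempty Λ
  case neg =>
    refine ⟨x (Classical.arbitrary β), hxA _, ?_⟩
    intro u hu l
    exact absurd ⟨l⟩ hΛ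
  obtain ⟨l₀⟩ := hΛ
  have mm0 : ∀ (l : Λ) {a b : X}, 0 ≤ a → a ≤ b → m l a ≤ m l b :=
    fun l {a b} ha h => S15.mmono0 m hmono l ha h
  set xp : β → X := fun b => (x b) ⊔ 0 with hxp
  set xm : β → X := fun b => (-(x b)) ⊔ 0 with hxm
  have hxpm : ∀ b, x b = xp b - xm b := fun b => (S15.pp_sub_pn (x b)).symm
  have hbddp : ∀ l, ∃ M : ℝ, ∀ b, m l (xp b) ≤ M := by
    intro l
    obtain ⟨M, hM⟩ := hAbdd l
    refine ⟨M, fun b => le_trans (hmono l _ _ ?_) (hM (x b) (hxA b))⟩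
    rw [abs_of_nonneg (S15.pp_nonneg _)]
    exact S15.pp_le_abs _
  have hbddm : ∀ l, ∃ M : ℝ, ∀ b, m l (xm b) ≤ M := by
    intro l
    obtain ⟨M, hM⟩ := hAbdd l
    refine ⟨M, fun b => le_trans (hmono l _ _ ?_) (hM (x b) (hxA b))⟩
    rw [abs_of_nonneg (S15.pp_nonneg _)]
    exact (S15.pp_le_abs _).trans (by rw [abs_neg])
  have hCp : ∀ u : X, 0 ≤ u → ∀ l, ∀ ε > (0:ℝ), ∃ N, ∀ b ≥ N, ∀ c ≥ N,
      m l (|xp b - xp c| ⊓ u) < ε := by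
    intro u hu l ε hε
    obtain ⟨N, hN⟩ := hxC u hu l ε hε
    refine ⟨N, fun b hb c hc =>
      lt_of_le_of_lt (mm0 l (le_inf (abs_nonneg _) hu) ?_) (hN b hb c hc)⟩
    exact inf_le_inf_right u (S15.abs_pp_sub_pp_le _ _)
  have hCm : ∀ u : X, 0 ≤ u → ∀ l, ∀ ε > (0:ℝ), ∃ N, ∀ b ≥ N, ∀ c ≥ N,
      m l (|xm b - xm c| ⊓ u) < ε := by
    intro u hu l ε hε
    obtain ⟨N, hN⟩ := hxC u hu l ε hε
    refine ⟨N, fun b hb c hc =>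
      lt_of_le_of_lt (mm0 l (le_inf (abs_nonneg _) hu) ?_) (hN b hb c hc)⟩
    refine inf_le_inf_right u ?_
    refine (S15.abs_pp_sub_pp_le _ _).trans ?_
    rw [show -(x b) - -(x c) = x c - x b by abel, abs_sub_comm]
  obtain ⟨p, hp⟩ := S15.pos_limit m hadd hsmul hmono hsep hdir hLeb hLevi l₀ xp
    (fun b => S15.pp_nonneg _) hbddp hCp
  obtain ⟨q, hq⟩ := S15.pos_limit m hadd hsmul hmono hsep hdir hLeb hLevi l₀ xm
    (fun b => S15.pp_nonneg _) hbddm hCm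
  set x₀ : X := p - q with hx₀def
  have hconv : ∀ u : X, 0 ≤ u → ∀ l, ∀ ε > (0:ℝ), ∃ N, ∀ b ≥ N,
      m l (|x b - x₀| ⊓ u) < ε := by
    intro u hu l ε hε
    obtain ⟨N, hN⟩ := S15.ev_and (hp u hu l (ε/2) (by linarith)) (hq u hu l (ε/2) (by linarith))
    refine ⟨N, fun b hb => ?_⟩
    obtain ⟨h1, h2⟩ := hN b hb
    have key : |x b - x₀| ⊓ u ≤ |xp b - p| ⊓ u + |xm b - q| ⊓ u := by
      refine le_trans (inf_le_inf_right u ?_) (S15.trunc_subadd (abs_nonneg _) (abs_nonneg _) hu)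
      calc |x b - x₀| = |(xp b - p) + -(xm b - q)| := by
            rw [hxpm b]
            congr 1
            rw [hx₀def]
            abel
      _ ≤ |xp b - p| + |-(xm b - q)| := S15.pabs_add _ _
      _ = |xp b - p| + |xm b - q| := by rw [abs_neg]
    calc m l (|x b - x₀| ⊓ u) ≤ m l (|xp b - p| ⊓ u + |xm b - q| ⊓ u) :=
          mm0 l (le_inf (abs_nonneg _) hu) key
    _ ≤ m l (|xp b - p| ⊓ u) + m l (|xm b - q| ⊓ u) := hadd l _ _
    _ < ε/2 + ε/2 := add_lt_add h1 h2
    _ = ε := by ring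
  -- membership in A via um-closedness
  have hopen : ∀ o : Set X, TopologicalSpace.GenerateOpen
      {s | ∃ (zc : X) (ε : ℝ) (l : Λ) (u : X), 0 < ε ∧ 0 ≤ u ∧
        s = {y : X | m l (|y - zc| ⊓ u) < ε}} o →
      x₀ ∈ o → ∃ N, ∀ b ≥ N, x b ∈ o := by
    intro o ho
    induction ho with
    | basic s hsmem =>
      obtain ⟨zc, ε, l, u, hε, hu, rfl⟩ := hsmem
      intro hx₀
      have hx₀' : m l (|x₀ - zc| ⊓ u) < ε := hx₀
      obtain ⟨N, hN⟩ := hconv u hu l (ε - m l (|x₀ - zc| ⊓ u)) (by linarith)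
      refine ⟨N, fun b hb => ?_⟩
      show m l (|x b - zc| ⊓ u) < ε
      have key : |x b - zc| ⊓ u ≤ |x b - x₀| ⊓ u + |x₀ - zc| ⊓ u := by
        refine le_trans (inf_le_inf_right u ?_)
          (S15.trunc_subadd (abs_nonneg _) (abs_nonneg _) hu)
        calc |x b - zc| = |(x b - x₀) + (x₀ - zc)| := by rw [sub_add_sub_cancel]
        _ ≤ |x b - x₀| + |x₀ - zc| := S15.pabs_add _ _
      have h2 : m l (|x b - zc| ⊓ u) ≤ m l (|x b - x₀| ⊓ u) + m l (|x₀ - zc| ⊓ u) :=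
        (mm0 l (le_inf (abs_nonneg _) hu) key).trans (hadd l _ _)
      have h3 := hN b hb
      linarith
    | univ => exact fun _ => ⟨Classical.arbitrary β, fun b _ => trivial⟩
    | inter s t _ _ ihs iht =>
      intro hx
      obtain ⟨N, hN⟩ := S15.ev_and (ihs hx.1) (iht hx.2)
      exact ⟨N, fun b hb => hN b hb⟩
    | sUnion S _ ih =>
      intro hx
      obtain ⟨t, htS, hxt⟩ := hx
      obtain ⟨N, hN⟩ := ih t htS hxt
      exact ⟨N, fun b hb => Set.mem_sUnion.2 ⟨t, htS, hN b hb⟩⟩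
  have hx₀A : x₀ ∈ A := by
    letI : TopologicalSpace X := umTop m
    have hcl : x₀ ∈ closure A := by
      rw [mem_closure_iff]
      intro o ho hxo
      obtain ⟨N, hN⟩ := hopen o ho hxo
      exact ⟨x N, hN N (le_refl N), hxA N⟩
    rwa [hAclosed.closure_eq] at hcl
  refine ⟨x₀, hx₀A, ?_⟩
  intro u hu l
  rw [S15.tendsto_zero_iff_ev (fun b => S15.mnonneg m hadd hsmul hmono l _)]
  exact hconv u hu l
end
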